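/- arXiv:1104.1227 — 12 statements merged into one kernel-verified Lean document; each statement's English description precedes it below -/
import Mathlib

section
/- For a single user (N=1) with SINR payoff γ(p_0,p) = h_{11} p / (h_{10} p_0 + n), under the first-order intervention rule f(p) = min{α|p - p*|, P_0}, the target power p* ∈ (0,P_1] is a Nash equilibrium (i.e., p* maximizes γ(f(p),p) over p ∈ [0,P_1]) if and only if α ≥ n/(p* h_{10}) and P_0 ≥ (P_1 - p*) n / (p* h_{10}), provided p* < P_1. -/
/-- Single-user version of Theorem 1: under the first-order intervention rule
`f(p) = min {α |p - p*|, P₀}`, the target `p* ∈ (0, P₁)` is a Nash equilibrium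
(maximizes the user's SINR) iff `α ≥ n/(p* h₁₀)` and `P₀ ≥ (P₁ - p*) n/(p* h₁₀)`. -/
theorem stmt1 (h11 h10 n P1 P0 pstar α : ℝ)
    (hh11 : 0 < h11) (hh10 : 0 < h10) (hn : 0 < n) (hP1 : 0 < P1) (hP0 : 0 < P0)
    (hα : 0 ≤ α) (hp1 : 0 < pstar) (hp2 : pstar < P1) :
    (∀ q, 0 ≤ q → q ≤ P1 →
        h11 * q / (h10 * min (α * |q - pstar|) P0 + n) ≤
        h11 * pstar / (h10 * min (α * |pstar - pstar|) P0 + n))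
      ↔ (n / (pstar * h10) ≤ α ∧ (P1 - pstar) * n / (pstar * h10) ≤ P0) := by
  have hph : 0 < pstar * h10 := mul_pos hp1 hh10
  have hR : h10 * min (α * |pstar - pstar|) P0 + n = n := by
    simp [sub_self, abs_zero, min_eq_left hP0.le]
  rw [hR]
  constructor
  · intro h
    have key : ∀ q, pstar ≤ q → q ≤ P1 →
        n * (q - pstar) ≤ pstar * h10 * min (α * (q - pstar)) P0 := by
      intro q hq1 hq2
      have h0q : (0:ℝ) ≤ q := le_trans hp1.le hq1
      have hthis := h q h0q hq2
      rw [abs_of_nonneg (by linarith : (0:ℝ) ≤ q - pstar)] at hthis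
      have hmin0 : (0:ℝ) ≤ min (α * (q - pstar)) P0 :=
        le_min (mul_nonneg hα (by linarith)) hP0.le
      have hden : 0 < h10 * min (α * (q - pstar)) P0 + n := by nlinarith
      rw [div_le_div_iff₀ hden hn] at hthis
      nlinarith [hthis]
    have hkeyP1 := key P1 hp2.le le_rfl
    have hα' : 0 < α := by
      by_contra hle
      push_neg at hle
      have hα0 : α = 0 := le_antisymm hle hα
      rw [hα0] at hkeyP1
      have : min ((0:ℝ) * (P1 - pstar)) P0 = 0 := by
        simp [min_eq_left hP0.le]
      rw [this] at hkeyP1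
      nlinarith
    constructor
    · set q : ℝ := min P1 (pstar + P0 / α) with hq
      have hPα : 0 < P0 / α := div_pos hP0 hα'
      have hq1 : pstar < q := lt_min hp2 (by linarith)
      have hq2 : q ≤ P1 := min_le_left _ _
      have hmineq : min (α * (q - pstar)) P0 = α * (q - pstar) := by
        apply min_eq_left
        have : q - pstar ≤ P0 / α := by
          have := min_le_right P1 (pstar + P0 / α)
          linarith
        calc α * (q - pstar) ≤ α * (P0 / α) := by
              exact mul_le_mul_of_nonneg_left this hα
          _ = P0 := by field_simp
      have := key q hq1.le hq2
      rw [hmineq] at this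
      rw [div_le_iff₀ hph]
      nlinarith [this, sub_pos.mpr hq1]
    · rw [div_le_iff₀ hph]
      have hmle : min (α * (P1 - pstar)) P0 ≤ P0 := min_le_right _ _
      nlinarith
  · rintro ⟨h1, h2⟩ q hq0 hq1
    rw [div_le_iff₀ hph] at h1 h2
    rcases le_or_gt q pstar with hc | hc
    · apply div_le_div₀ (by positivity)
        (mul_le_mul_of_nonneg_left hc hh11.le) hn
      have : (0:ℝ) ≤ min (α * |q - pstar|) P0 :=
        le_min (mul_nonneg hα (abs_nonneg _)) hP0.le
      nlinarith
    · rw [abs_of_nonneg (by linarith : (0:ℝ) ≤ q - pstar)]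
      have hmin0 : (0:ℝ) ≤ min (α * (q - pstar)) P0 :=
        le_min (mul_nonneg hα (by linarith)) hP0.le
      have hden : 0 < h10 * min (α * (q - pstar)) P0 + n := by nlinarith
      rw [div_le_div_iff₀ hden hn]
      rcases min_cases (α * (q - pstar)) P0 with ⟨he, _⟩ | ⟨he, hle⟩ <;> rw [he]
      · nlinarith [mul_le_mul_of_nonneg_left
          (mul_le_mul_of_nonneg_right h1 (sub_nonneg.mpr hc.le)) hh11.le]
      · nlinarith [mul_le_mul_of_nonneg_left h2 hh11.le,
          mul_nonneg (mul_nonneg hh11.le hn.le) (sub_nonneg.mpr hq1)]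
end

section
/- (Theorem 1, 'if' direction) Let p* ∈ ∏_i (0,P_i] be a target power profile and consider the first-order intervention rule f(p) = [Σ_i α_i |p_i - p_i*|]_0^{P_0} (truncation to [0,P_0]). If for every user i with p_i* < P_i one has α_i ≥ (Σ_{j≠i} h_ij p_j* + n_i)/(p_i* h_{i0}) and P_0 ≥ (P_i - p_i*)(Σ_{j≠i} h_ij p_j* + n_i)/(p_i* h_{i0}), and α_i = 0 is allowed otherwise, then p* is a Nash equilibrium of the game where user i's payoff is γ_i(f(p),p) = h_ii p_i / (h_{i0} f(p) + Σ_{j≠i} h_ij p_j + n_i). -/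
open Finset

/-- First-order intervention rule based on individual transmit powers:
`f(p) = [∑ i, α_i |p_i - p_i*|]₀^{P₀}` (the sum is nonnegative, so the lower
truncation is inactive). -/
noncomputable def intv {N : ℕ} (α pstar : Fin N → ℝ) (P0 : ℝ) (p : Fin N → ℝ) : ℝ :=
  min (∑ i, α i * |p i - pstar i|) P0

/-- SINR of user `i` under the intervention rule: `γ_i(f(p), p) =
h_ii p_i / (h_i0 f(p) + ∑_{j≠i} h_ij p_j + n_i)`. -/
noncomputable def sinr {N : ℕ} (h : Fin N → Fin N → ℝ) (h0 n α pstar : Fin N → ℝ)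
    (P0 : ℝ) (i : Fin N) (p : Fin N → ℝ) : ℝ :=
  h i i * p i / (h0 i * intv α pstar P0 p + ∑ j ∈ univ.erase i, h i j * p j + n i)

/-- `p` is a Nash equilibrium: no user can improve its payoff by a unilateral
deviation within `[0, Pmax i]`. -/
def isNE {N : ℕ} (Pmax : Fin N → ℝ) (payoff : Fin N → (Fin N → ℝ) → ℝ)
    (p : Fin N → ℝ) : Prop :=
  ∀ i, ∀ q, 0 ≤ q → q ≤ Pmax i →
    payoff i (Function.update p i q) ≤ payoff i p

/-- Theorem 1, 'if' direction: the stated lower bounds on the intervention rates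
and the power budget imply that the target `p*` is a Nash equilibrium. -/
theorem stmt2 (N : ℕ) (h : Fin N → Fin N → ℝ) (h0 n Pmax pstar α : Fin N → ℝ) (P0 : ℝ)
    (hh : ∀ i j, 0 < h i j) (hh0 : ∀ i, 0 < h0 i) (hn : ∀ i, 0 < n i)
    (hP : ∀ i, 0 < Pmax i) (hp1 : ∀ i, 0 < pstar i) (hp2 : ∀ i, pstar i ≤ Pmax i)
    (hα0 : ∀ i, 0 ≤ α i) (hP0 : 0 < P0)
    (hα : ∀ i, pstar i < Pmax i →
      (∑ j ∈ univ.erase i, h i j * pstar j + n i) / (pstar i * h0 i) ≤ α i)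
    (hP0c : ∀ i, pstar i < Pmax i →
      (Pmax i - pstar i) * (∑ j ∈ univ.erase i, h i j * pstar j + n i) /
        (pstar i * h0 i) ≤ P0) :
    isNE Pmax (sinr h h0 n α pstar P0) pstar := by
  intro i q hq0 hqP
  set S := ∑ j ∈ univ.erase i, h i j * pstar j with hSdef
  have hS0 : 0 < S + n i := by
    have : 0 ≤ S := Finset.sum_nonneg fun j _ => mul_nonneg (hh i j).le (hp1 j).le
    linarith [hn i]
  have hsum : ∑ j ∈ univ.erase i, h i j * Function.update pstar i q j = S := by
    apply Finset.sum_congr rfl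
    intro j hj
    rw [Function.update_of_ne (Finset.ne_of_mem_erase hj)]
  have hupd : Function.update pstar i q i = q := Function.update_self i q pstar
  have hintvq : intv α pstar P0 (Function.update pstar i q)
      = min (α i * |q - pstar i|) P0 := by
    unfold intv
    congr 1
    rw [Fintype.sum_eq_single i]
    · rw [hupd]
    · intro j hj
      rw [Function.update_of_ne hj, sub_self, abs_zero, mul_zero]
  have hintv0 : intv α pstar P0 pstar = 0 := by
    unfold intv
    simp [min_eq_left hP0.le]
  set M := min (α i * |q - pstar i|) P0 with hMdef
  have hM0 : 0 ≤ M := le_min (mul_nonneg (hα0 i) (abs_nonneg _)) hP0.le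
  unfold sinr
  rw [hintv0, hsum, hintvq, hupd]
  rw [div_le_div_iff₀ (by nlinarith [mul_nonneg (hh0 i).le hM0]) (by linarith [hS0])]
  rw [← hSdef]
  rcases le_or_gt q (pstar i) with hle | hlt
  · nlinarith [mul_nonneg (mul_nonneg (mul_pos (hh i i) (hp1 i)).le (hh0 i).le) hM0,
      mul_le_mul_of_nonneg_right (mul_le_mul_of_nonneg_left hle (hh i i).le) hS0.le]
  · have hpP : pstar i < Pmax i := lt_of_lt_of_le hlt hqP
    have h1 := hα i hpP
    have h2 := hP0c i hpP
    have hd : 0 < pstar i * h0 i := mul_pos (hp1 i) (hh0 i)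
    have habs : |q - pstar i| = q - pstar i := abs_of_pos (by linarith)
    have hMkey : (q - pstar i) * (S + n i) ≤ pstar i * h0 i * M := by
      rcases min_cases (α i * |q - pstar i|) P0 with ⟨hmin, _⟩ | ⟨hmin, _⟩
      · rw [hMdef, hmin, habs]
        have := (div_le_iff₀ hd).mp h1
        nlinarith
      · rw [hMdef, hmin]
        rw [div_le_iff₀ hd] at h2
        have hq2 : q - pstar i ≤ Pmax i - pstar i := by linarith
        nlinarith [mul_le_mul_of_nonneg_right hq2 hS0.le]
    nlinarith [mul_le_mul_of_nonneg_left hMkey (hh i i).le]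
end

section
/- (Theorem 1, 'only if' direction) With the setup of the first-order intervention rule f(p) = [Σ_i α_i |p_i - p_i*|]_0^{P_0}, if the target p* ∈ ∏_i (0,P_i] is a Nash equilibrium of the induced game, then for every user i with p_i* < P_i it must hold that α_i ≥ (Σ_{j≠i} h_ij p_j* + n_i)/(p_i* h_{i0}) and P_0 ≥ (P_i - p_i*)(Σ_{j≠i} h_ij p_j* + n_i)/(p_i* h_{i0}). -/
open Finset

/-- Theorem 1, 'only if' direction: if the target `p*` is a Nash equilibrium of the
game induced by the first-order intervention rule, then the stated lower bounds on
the intervention rates and the power budget must hold for every user with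
`p_i* < P_i`. -/
theorem stmt3 (N : ℕ) (h : Fin N → Fin N → ℝ) (h0 n Pmax pstar α : Fin N → ℝ) (P0 : ℝ)
    (hh : ∀ i j, 0 < h i j) (hh0 : ∀ i, 0 < h0 i) (hn : ∀ i, 0 < n i)
    (hP : ∀ i, 0 < Pmax i) (hp1 : ∀ i, 0 < pstar i) (hp2 : ∀ i, pstar i ≤ Pmax i)
    (hα0 : ∀ i, 0 ≤ α i) (hP0 : 0 < P0)
    (hNE : isNE Pmax (sinr h h0 n α pstar P0) pstar) :
    ∀ i, pstar i < Pmax i →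
      (∑ j ∈ univ.erase i, h i j * pstar j + n i) / (pstar i * h0 i) ≤ α i ∧
      (Pmax i - pstar i) * (∑ j ∈ univ.erase i, h i j * pstar j + n i) /
        (pstar i * h0 i) ≤ P0 := by
  intro i hi
  set D : ℝ := ∑ j ∈ univ.erase i, h i j * pstar j + n i with hD
  have hDpos : 0 < D := by
    have : 0 ≤ ∑ j ∈ univ.erase i, h i j * pstar j :=
      Finset.sum_nonneg fun j _ => le_of_lt (mul_pos (hh i j) (hp1 j))
    have := hn i; positivity
  -- intervention at pstar is 0
  have hintv0 : intv α pstar P0 pstar = 0 := by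
    unfold intv
    have : (∑ j, α j * |pstar j - pstar j|) = 0 := by
      apply Finset.sum_eq_zero; intro j _; simp
    rw [this, min_eq_left (le_of_lt hP0)]
  set q := Pmax i with hq
  have hqp : 0 < q - pstar i := sub_pos.mpr hi
  set F : ℝ := min (α i * (q - pstar i)) P0 with hF
  have hFnn : 0 ≤ F := le_min (mul_nonneg (hα0 i) hqp.le) hP0.le
  -- intervention at the deviation
  have hintv1 : intv α pstar P0 (Function.update pstar i q) = F := by
    unfold intv
    congr 1
    rw [Finset.sum_eq_single i]
    · simp [abs_of_nonneg hqp.le]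
    · intro j _ hj; simp [Function.update_of_ne hj]
    · simp
  have hsum : (∑ j ∈ univ.erase i, h i j * Function.update pstar i q j)
      = ∑ j ∈ univ.erase i, h i j * pstar j := by
    apply Finset.sum_congr rfl
    intro j hj
    rw [Function.update_of_ne (Finset.ne_of_mem_erase hj)]
  have hkey := hNE i q (le_of_lt (lt_of_lt_of_le (hp1 i) hi.le)) le_rfl
  rw [sinr, sinr, hintv0, hintv1, hsum] at hkey
  simp only [Function.update_self] at hkey
  have hden1 : 0 < h0 i * F + D := by
    have := mul_nonneg (hh0 i).le hFnn
    linarith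
  have hden0 : 0 < h0 i * 0 + D := by linarith
  rw [add_assoc, add_assoc, ← hD, div_le_div_iff₀ hden1 hden0] at hkey
  -- cancel h i i
  have hkey2 : q * D ≤ pstar i * (h0 i * F + D) := by
    have hhi := hh i i
    nlinarith [hkey]
  have hkey3 : (q - pstar i) * D ≤ pstar i * h0 i * F := by nlinarith
  have hph : 0 < pstar i * h0 i := mul_pos (hp1 i) (hh0 i)
  have hFge : (q - pstar i) * D / (pstar i * h0 i) ≤ F := by
    rw [div_le_iff₀ hph]; linarith
  constructor
  · have h1 : (q - pstar i) * D / (pstar i * h0 i) ≤ α i * (q - pstar i) :=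
      le_trans hFge (min_le_left _ _)
    have h2 : (q - pstar i) * (D / (pstar i * h0 i)) ≤ (q - pstar i) * α i := by
      rw [mul_div_assoc] at h1; linarith
    have := (mul_le_mul_iff_right₀ hqp).mp h2
    linarith
  · exact le_trans hFge (min_le_right _ _)
end

section
/- Under a first-order intervention rule f(p) = [Σ_i α_i |p_i - p_i*|]_0^{P_0} with target p*, if P_0 ≤ Σ_{j≠i} α_j (P_j - p_j*) for all users i with p_i* < P_i (and the conditions of Theorem 1 hold so that p* is a NE), then the maximum power profile P = (P_1,...,P_N) is also a Nash equilibrium of the induced game; in particular p* is not strongly sustained. -/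
open Finset

/-- If `P₀ ≤ ∑_{j≠i} α_j (P_j - p_j*)` for every user `i` with `p_i* < P_i`
(and the conditions of Theorem 1 hold, so that `p*` is a NE), then the maximum
power profile `P` is also a Nash equilibrium; in particular, if `p* ≠ P`, the
target is not strongly sustained (not the unique NE). -/
theorem stmt4 (N : ℕ) (h : Fin N → Fin N → ℝ) (h0 n Pmax pstar α : Fin N → ℝ) (P0 : ℝ)
    (hh : ∀ i j, 0 < h i j) (hh0 : ∀ i, 0 < h0 i) (hn : ∀ i, 0 < n i)
    (hP : ∀ i, 0 < Pmax i) (hp1 : ∀ i, 0 < pstar i) (hp2 : ∀ i, pstar i ≤ Pmax i)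
    (hα0 : ∀ i, 0 ≤ α i) (hP0 : 0 < P0)
    (hα : ∀ i, pstar i < Pmax i →
      (∑ j ∈ univ.erase i, h i j * pstar j + n i) / (pstar i * h0 i) ≤ α i)
    (hP0c : ∀ i, pstar i < Pmax i →
      (Pmax i - pstar i) * (∑ j ∈ univ.erase i, h i j * pstar j + n i) /
        (pstar i * h0 i) ≤ P0)
    (hsmall : ∀ i, pstar i < Pmax i →
      P0 ≤ ∑ j ∈ univ.erase i, α j * (Pmax j - pstar j)) :
    isNE Pmax (sinr h h0 n α pstar P0) Pmax ∧
    (pstar ≠ Pmax →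
      ¬ (∀ p : Fin N → ℝ, (∀ i, 0 ≤ p i ∧ p i ≤ Pmax i) →
          isNE Pmax (sinr h h0 n α pstar P0) p → p = pstar)) := by
  have key : isNE Pmax (sinr h h0 n α pstar P0) Pmax := by
    intro i q hq0 hq
    unfold sinr intv
    set S : ℝ := ∑ j ∈ univ.erase i, α j * (Pmax j - pstar j) with hS
    have hS0 : 0 ≤ S := Finset.sum_nonneg fun j _ =>
      mul_nonneg (hα0 j) (sub_nonneg.mpr (hp2 j))
    have hI : ∑ j ∈ univ.erase i, h i j * Function.update Pmax i q j
            = ∑ j ∈ univ.erase i, h i j * Pmax j := by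
      refine Finset.sum_congr rfl fun j hj => ?_
      rw [Function.update_of_ne (Finset.mem_erase.mp hj).1]
    have hI0 : 0 ≤ ∑ j ∈ univ.erase i, h i j * Pmax j :=
      Finset.sum_nonneg fun j _ => mul_nonneg (hh i j).le (hP j).le
    have hsum_full : ∑ j, α j * |Pmax j - pstar j| = α i * (Pmax i - pstar i) + S := by
      rw [← Finset.add_sum_erase _ _ (Finset.mem_univ i),
        abs_of_nonneg (sub_nonneg.mpr (hp2 i))]
      congr 1
      exact Finset.sum_congr rfl fun j _ => by
        rw [abs_of_nonneg (sub_nonneg.mpr (hp2 j))]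
    have hsum_q : ∑ j, α j * |Function.update Pmax i q j - pstar j|
        = α i * |q - pstar i| + S := by
      rw [← Finset.add_sum_erase _ _ (Finset.mem_univ i), Function.update_self]
      congr 1
      refine Finset.sum_congr rfl fun j hj => ?_
      rw [Function.update_of_ne (Finset.mem_erase.mp hj).1,
        abs_of_nonneg (sub_nonneg.mpr (hp2 j))]
    rw [hI, hsum_full, hsum_q, Function.update_self]
    have hmin : min (α i * (Pmax i - pstar i) + S) P0 ≤ min (α i * |q - pstar i| + S) P0 := by
      by_cases hlt : pstar i < Pmax i
      · have h1 : P0 ≤ S := hsmall i hlt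
        have h2 : P0 ≤ α i * |q - pstar i| + S := by
          have := mul_nonneg (hα0 i) (abs_nonneg (q - pstar i))
          linarith
        rw [min_eq_right h2]
        exact min_le_right _ _
      · have heq : Pmax i = pstar i := le_antisymm (not_lt.mp hlt) (hp2 i)
        refine min_le_min (by
          have := mul_nonneg (hα0 i) (abs_nonneg (q - pstar i))
          rw [heq]; simp; linarith) le_rfl
    have hminnn : 0 ≤ min (α i * (Pmax i - pstar i) + S) P0 := by
      have := mul_nonneg (hα0 i) (sub_nonneg.mpr (hp2 i))
      exact le_min (by linarith) hP0.le
    have hDpos : 0 < h0 i * min (α i * (Pmax i - pstar i) + S) P0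
        + ∑ j ∈ univ.erase i, h i j * Pmax j + n i := by
      have := mul_nonneg (hh0 i).le hminnn
      have := hn i
      linarith
    refine div_le_div₀ (mul_nonneg (hh i i).le (hP i).le)
      (mul_le_mul_of_nonneg_left hq (hh i i).le) hDpos ?_
    have := mul_le_mul_of_nonneg_left hmin (hh0 i).le
    linarith
  refine ⟨key, fun hne huniq => ?_⟩
  exact hne ((huniq Pmax (fun i => ⟨(hP i).le, le_rfl⟩) key).symm)
end

section
/- (Theorem 2) Let p* ∈ ∏_i (0,P_i] and label the users with p_i* < P_i as 1,...,N'. If the intervention rates satisfy α_i > (1/p_i*) Σ_{j>i} α_j (P_j - p_j*) + (Σ_{j<i} h_ij p_j* + Σ_{j>i} h_ij P_j + n_i)/(p_i* h_{i0}) and the capability satisfies P_0 > (P_i/p_i*) Σ_{j>i} α_j (P_j - p_j*) + (P_i - p_i*)(Σ_{j<i} h_ij p_j* + Σ_{j>i} h_ij P_j + n_i)/(p_i* h_{i0}) for all i ≤ N' (with α_i = 0 for i > N'), then p* is the unique Nash equilibrium of the game induced by the first-order intervention rule f(p) = [Σ_i α_i |p_i - p_i*|]_0^{P_0}. -/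
open Finset

private lemma sum_upd {N : ℕ} (α pstar p : Fin N → ℝ) (i : Fin N) (q : ℝ) :
    ∑ j, α j * |Function.update p i q j - pstar j|
      = α i * |q - pstar i| + ∑ j ∈ univ.erase i, α j * |p j - pstar j| := by
  rw [← Finset.add_sum_erase univ _ (mem_univ i)]
  congr 1
  · simp
  · exact Finset.sum_congr rfl fun j hj => by
      rw [Function.update_of_ne (Finset.ne_of_mem_erase hj)]

private lemma erase_split {N : ℕ} (i : Fin N) (g : Fin N → ℝ) :
    ∑ j ∈ univ.erase i, g j
      = ∑ j ∈ univ.filter (fun j => j < i), g j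
        + ∑ j ∈ univ.filter (fun j => i < j), g j := by
  have hdisj : Disjoint (univ.filter (fun j : Fin N => j < i))
      (univ.filter (fun j : Fin N => i < j)) := by
    simp only [Finset.disjoint_left, mem_filter, mem_univ, true_and]
    exact fun j h1 h2 => absurd h1 (lt_asymm h2)
  rw [← Finset.sum_union hdisj]
  apply Finset.sum_congr _ fun _ _ => rfl
  ext j
  simp only [mem_union, mem_filter, mem_erase, mem_univ, and_true, true_and]
  exact ne_iff_lt_or_gt

set_option maxHeartbeats 2000000 in
/-- Theorem 2: sufficient conditions for strong sustainment. Users are labeled so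
that `p_i* < P_i` iff `i < N'`. If the intervention rates and the capability
satisfy the stated strict bounds for all `i < N'` (with `α_i = 0` for `i ≥ N'`),
then `p*` is the unique Nash equilibrium. -/
theorem stmt5 (N N' : ℕ) (h : Fin N → Fin N → ℝ) (h0 n Pmax pstar α : Fin N → ℝ)
    (P0 : ℝ)
    (hh : ∀ i j, 0 < h i j) (hh0 : ∀ i, 0 < h0 i) (hn : ∀ i, 0 < n i)
    (hP : ∀ i, 0 < Pmax i) (hp1 : ∀ i, 0 < pstar i) (hp2 : ∀ i, pstar i ≤ Pmax i)
    (hα0 : ∀ i, 0 ≤ α i) (hP0 : 0 < P0)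
    (hord : ∀ i : Fin N, pstar i < Pmax i ↔ (i : ℕ) < N')
    (hαz : ∀ i : Fin N, ¬ pstar i < Pmax i → α i = 0)
    (hα : ∀ i : Fin N, pstar i < Pmax i →
      (1 / pstar i) * ∑ j ∈ univ.filter (fun j => i < j), α j * (Pmax j - pstar j)
        + (∑ j ∈ univ.filter (fun j => j < i), h i j * pstar j
            + ∑ j ∈ univ.filter (fun j => i < j), h i j * Pmax j + n i) /
          (pstar i * h0 i) < α i)
    (hP0c : ∀ i : Fin N, pstar i < Pmax i →
      (Pmax i / pstar i) * ∑ j ∈ univ.filter (fun j => i < j), α j * (Pmax j - pstar j)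
        + (Pmax i - pstar i) * (∑ j ∈ univ.filter (fun j => j < i), h i j * pstar j
            + ∑ j ∈ univ.filter (fun j => i < j), h i j * Pmax j + n i) /
          (pstar i * h0 i) < P0) :
    isNE Pmax (sinr h h0 n α pstar P0) pstar ∧
    (∀ p : Fin N → ℝ, (∀ i, 0 ≤ p i ∧ p i ≤ Pmax i) →
      isNE Pmax (sinr h h0 n α pstar P0) p → p = pstar) := by
  have habs : ∀ (p : Fin N → ℝ) (j : Fin N), 0 ≤ α j * |p j - pstar j| :=
    fun p j => mul_nonneg (hα0 j) (abs_nonneg _)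
  have herase_nonneg : ∀ (p : Fin N → ℝ), (∀ j, 0 ≤ p j) → ∀ i : Fin N,
      (0:ℝ) ≤ ∑ j ∈ univ.erase i, h i j * p j :=
    fun p hp i => Finset.sum_nonneg fun j _ => mul_nonneg (hh i j).le (hp j)
  have herase_upd : ∀ (p : Fin N → ℝ) (i : Fin N) (q : ℝ),
      ∑ j ∈ univ.erase i, h i j * Function.update p i q j
        = ∑ j ∈ univ.erase i, h i j * p j :=
    fun p i q => Finset.sum_congr rfl fun j hj => by
      rw [Function.update_of_ne (Finset.ne_of_mem_erase hj)]
  have hA_nonneg : ∀ i : Fin N,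
      (0:ℝ) ≤ ∑ j ∈ univ.filter (fun j => i < j), α j * (Pmax j - pstar j) :=
    fun i => Finset.sum_nonneg fun j _ => mul_nonneg (hα0 j) (sub_nonneg.2 (hp2 j))
  have key1 : ∀ i : Fin N, pstar i < Pmax i →
      h0 i * (∑ j ∈ univ.filter (fun j => i < j), α j * (Pmax j - pstar j))
        + (∑ j ∈ univ.filter (fun j => j < i), h i j * pstar j
            + ∑ j ∈ univ.filter (fun j => i < j), h i j * Pmax j + n i)
        < α i * (pstar i * h0 i) := by
    intro i hi
    have h1 := hα i hi
    have hps := (hp1 i).ne'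
    have hh0' := (hh0 i).ne'
    have hph : (0:ℝ) < pstar i * h0 i := mul_pos (hp1 i) (hh0 i)
    rw [show (1 / pstar i) * (∑ j ∈ univ.filter (fun j => i < j), α j * (Pmax j - pstar j))
        + (∑ j ∈ univ.filter (fun j => j < i), h i j * pstar j
            + ∑ j ∈ univ.filter (fun j => i < j), h i j * Pmax j + n i) /
          (pstar i * h0 i)
        = (h0 i * (∑ j ∈ univ.filter (fun j => i < j), α j * (Pmax j - pstar j))
            + (∑ j ∈ univ.filter (fun j => j < i), h i j * pstar j
              + ∑ j ∈ univ.filter (fun j => i < j), h i j * Pmax j + n i))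
          / (pstar i * h0 i) from by field_simp, div_lt_iff₀ hph] at h1
    linarith
  have key2 : ∀ i : Fin N, pstar i < Pmax i →
      h0 i * (Pmax i * ∑ j ∈ univ.filter (fun j => i < j), α j * (Pmax j - pstar j))
        + (Pmax i - pstar i) * (∑ j ∈ univ.filter (fun j => j < i), h i j * pstar j
            + ∑ j ∈ univ.filter (fun j => i < j), h i j * Pmax j + n i)
        < P0 * (pstar i * h0 i) := by
    intro i hi
    have h1 := hP0c i hi
    have hps := (hp1 i).ne'
    have hh0' := (hh0 i).ne'
    have hph : (0:ℝ) < pstar i * h0 i := mul_pos (hp1 i) (hh0 i)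
    rw [show (Pmax i / pstar i) * (∑ j ∈ univ.filter (fun j => i < j), α j * (Pmax j - pstar j))
        + (Pmax i - pstar i) * (∑ j ∈ univ.filter (fun j => j < i), h i j * pstar j
            + ∑ j ∈ univ.filter (fun j => i < j), h i j * Pmax j + n i) /
          (pstar i * h0 i)
        = (h0 i * (Pmax i * ∑ j ∈ univ.filter (fun j => i < j), α j * (Pmax j - pstar j))
            + (Pmax i - pstar i) * (∑ j ∈ univ.filter (fun j => j < i), h i j * pstar j
              + ∑ j ∈ univ.filter (fun j => i < j), h i j * Pmax j + n i))
          / (pstar i * h0 i) from by field_simp, div_lt_iff₀ hph] at h1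
    linarith
  constructor
  · -- p* is a NE
    intro i q hq0 hqP
    have hps_nonneg : ∀ j : Fin N, 0 ≤ pstar j := fun j => (hp1 j).le
    have hiz : intv α pstar P0 pstar = 0 := by
      unfold intv
      rw [Finset.sum_eq_zero fun j _ => by simp, min_eq_left hP0.le]
    have hiu : intv α pstar P0 (Function.update pstar i q)
        = min (α i * |q - pstar i|) P0 := by
      unfold intv
      rw [sum_upd, Finset.sum_eq_zero fun j _ => by simp, add_zero]
    unfold sinr
    rw [hiz, hiu, herase_upd, Function.update_self, mul_zero, zero_add]
    set m := min (α i * |q - pstar i|) P0 with hm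
    set E := ∑ j ∈ univ.erase i, h i j * pstar j with hE
    have hE0 : 0 ≤ E := herase_nonneg pstar hps_nonneg i
    have hEn : (0:ℝ) < E + n i := by linarith [hn i]
    have hm0 : 0 ≤ m := le_min (mul_nonneg (hα0 i) (abs_nonneg _)) hP0.le
    have hd1 : (0:ℝ) < h0 i * m + E + n i := by
      nlinarith [mul_nonneg (hh0 i).le hm0, hn i]
    rw [div_le_div_iff₀ hd1 hEn]
    by_cases hcase : pstar i < Pmax i
    · -- interior user
      have hEK : E + n i ≤ ∑ j ∈ univ.filter (fun j => j < i), h i j * pstar j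
          + ∑ j ∈ univ.filter (fun j => i < j), h i j * Pmax j + n i := by
        rw [hE, erase_split i]
        have : ∑ j ∈ univ.filter (fun j => i < j), h i j * pstar j
            ≤ ∑ j ∈ univ.filter (fun j => i < j), h i j * Pmax j :=
          Finset.sum_le_sum fun j _ => mul_le_mul_of_nonneg_left (hp2 j) (hh i j).le
        linarith
      rcases le_or_gt q (pstar i) with hq | hq
      · nlinarith [mul_nonneg (mul_nonneg (sub_nonneg.2 hq) hEn.le) (hh i i).le,
          mul_nonneg (mul_nonneg (mul_nonneg (hh i i).le (hp1 i).le) (hh0 i).le) hm0]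
      · have habsq : |q - pstar i| = q - pstar i := abs_of_pos (sub_pos.2 hq)
        rcases le_or_gt (α i * (q - pstar i)) P0 with hsm | hsm
        · -- no truncation
          have hmval : m = α i * (q - pstar i) := by rw [hm, habsq, min_eq_left hsm]
          have hEa : E + n i < α i * (pstar i * h0 i) := by
            have := key1 i hcase
            have := mul_nonneg (hh0 i).le (hA_nonneg i)
            linarith
          rw [hmval]
          nlinarith [mul_pos (hh i i) (sub_pos.2 hq), hEa]
        · -- truncation active
          have hmval : m = P0 := by rw [hm, habsq, min_eq_right hsm.le]
          have hlt2 : (q - pstar i) * (E + n i) < P0 * (pstar i * h0 i) := by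
            have h2 : (q - pstar i) * (E + n i)
                ≤ (Pmax i - pstar i) * (∑ j ∈ univ.filter (fun j => j < i), h i j * pstar j
                    + ∑ j ∈ univ.filter (fun j => i < j), h i j * Pmax j + n i) :=
              mul_le_mul (by linarith) hEK hEn.le (by linarith)
            have := key2 i hcase
            have := mul_nonneg (hh0 i).le (mul_nonneg (hP i).le (hA_nonneg i))
            linarith
          rw [hmval]
          nlinarith [mul_lt_mul_of_pos_left hlt2 (hh i i)]
    · -- saturated user : α i = 0, pstar i = Pmax i
      have hz : α i = 0 := hαz i hcase
      have hpe : pstar i = Pmax i := le_antisymm (hp2 i) (not_lt.1 hcase)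
      have hmz : m = 0 := by rw [hm, hz, zero_mul, min_eq_left hP0.le]
      have hqle : q ≤ pstar i := by rw [hpe]; exact hqP
      rw [hmz]
      nlinarith [mul_nonneg (mul_nonneg (sub_nonneg.2 hqle) hEn.le) (hh i i).le]
  · -- uniqueness
    intro p hp hNE
    have hpnn : ∀ j, 0 ≤ p j := fun j => (hp j).1
    -- Step 1: any NE dominates pstar
    have hge : ∀ i, pstar i ≤ p i := by
      intro i
      by_contra hlt
      push_neg at hlt
      have hne := hNE i (pstar i) (hp1 i).le (hp2 i)
      have hiu : intv α pstar P0 (Function.update p i (pstar i))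
          = min (∑ j ∈ univ.erase i, α j * |p j - pstar j|) P0 := by
        unfold intv; rw [sum_upd]; simp
      have hip : intv α pstar P0 p
          = min (α i * |p i - pstar i| + ∑ j ∈ univ.erase i, α j * |p j - pstar j|) P0 := by
        unfold intv; rw [← Finset.add_sum_erase univ _ (mem_univ i)]
      unfold sinr at hne
      rw [hiu, hip, herase_upd, Function.update_self] at hne
      set Sm := ∑ j ∈ univ.erase i, α j * |p j - pstar j| with hSm
      set E := ∑ j ∈ univ.erase i, h i j * p j with hE
      have hSm0 : 0 ≤ Sm := Finset.sum_nonneg fun j _ => habs p j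
      have hE0 : 0 ≤ E := herase_nonneg p hpnn i
      have hm20 : 0 ≤ min Sm P0 := le_min hSm0 hP0.le
      have hm10 : 0 ≤ min (α i * |p i - pstar i| + Sm) P0 :=
        le_min (by nlinarith [habs p i]) hP0.le
      have hmle : min Sm P0 ≤ min (α i * |p i - pstar i| + Sm) P0 :=
        min_le_min (by nlinarith [habs p i]) le_rfl
      have d2pos : 0 < h0 i * min Sm P0 + E + n i := by
        nlinarith [mul_nonneg (hh0 i).le hm20, hn i]
      have d1pos : 0 < h0 i * min (α i * |p i - pstar i| + Sm) P0 + E + n i := by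
        nlinarith [mul_nonneg (hh0 i).le hm10, hn i]
      rw [div_le_div_iff₀ d2pos d1pos] at hne
      have hd12 : h0 i * min Sm P0 + E + n i
          ≤ h0 i * min (α i * |p i - pstar i| + Sm) P0 + E + n i := by
        nlinarith [mul_le_mul_of_nonneg_left hmle (hh0 i).le]
      have c1 : h i i * p i * (h0 i * min Sm P0 + E + n i)
          < h i i * pstar i * (h0 i * min Sm P0 + E + n i) :=
        mul_lt_mul_of_pos_right (by nlinarith [hh i i]) d2pos
      have c2 : h i i * pstar i * (h0 i * min Sm P0 + E + n i)
          ≤ h i i * pstar i * (h0 i * min (α i * |p i - pstar i| + Sm) P0 + E + n i) :=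
        mul_le_mul_of_nonneg_left hd12 (mul_nonneg (hh i i).le (hp1 i).le)
      linarith
    -- Step 2: p = pstar
    by_contra hneq
    have hex : ∃ i, pstar i < p i := by
      by_contra hall
      push_neg at hall
      exact hneq (funext fun i => le_antisymm (hall i) (hge i))
    have hTne : (univ.filter (fun j : Fin N => pstar j < p j)).Nonempty := by
      obtain ⟨i, hi⟩ := hex
      exact ⟨i, by simp [hi]⟩
    set i := (univ.filter (fun j : Fin N => pstar j < p j)).min' hTne with hidef
    have hiT := Finset.min'_mem _ hTne
    have hilt : pstar i < p i := by
      have := hiT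
      rw [mem_filter] at this
      exact this.2
    have hminp : ∀ j, j < i → p j = pstar j := by
      intro j hj
      by_contra hne'
      have hjlt : pstar j < p j := lt_of_le_of_ne (hge j) (Ne.symm hne')
      have hjT : j ∈ univ.filter (fun j : Fin N => pstar j < p j) := by
        rw [mem_filter]; exact ⟨mem_univ j, hjlt⟩
      exact absurd (Finset.min'_le _ j hjT) (not_le.2 hj)
    have hi : pstar i < Pmax i := by
      rcases lt_or_ge (pstar i) (Pmax i) with h' | h'
      · exact h'
      · exact absurd hilt (not_lt.2 (le_trans (hp i).2 h'))
    -- the NE condition at i, deviation to pstar i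
    have hne := hNE i (pstar i) (hp1 i).le (hp2 i)
    have hiu : intv α pstar P0 (Function.update p i (pstar i))
        = min (∑ j ∈ univ.erase i, α j * |p j - pstar j|) P0 := by
      unfold intv; rw [sum_upd]; simp
    have hip : intv α pstar P0 p
        = min (α i * |p i - pstar i| + ∑ j ∈ univ.erase i, α j * |p j - pstar j|) P0 := by
      unfold intv; rw [← Finset.add_sum_erase univ _ (mem_univ i)]
    unfold sinr at hne
    rw [hiu, hip, herase_upd, Function.update_self, abs_of_pos (sub_pos.2 hilt)] at hne
    set Sm := ∑ j ∈ univ.erase i, α j * |p j - pstar j| with hSm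
    set E := ∑ j ∈ univ.erase i, h i j * p j with hE
    have hSm0 : 0 ≤ Sm := Finset.sum_nonneg fun j _ => habs p j
    have hE0 : 0 ≤ E := herase_nonneg p hpnn i
    have hEn : (0:ℝ) < E + n i := by linarith [hn i]
    have hSA : Sm ≤ ∑ j ∈ univ.filter (fun j => i < j), α j * (Pmax j - pstar j) := by
      rw [hSm, erase_split i]
      have e1 : ∑ j ∈ univ.filter (fun j => j < i), α j * |p j - pstar j| = 0 :=
        Finset.sum_eq_zero fun j hj => by
          rw [hminp j (by simpa using hj), sub_self, abs_zero, mul_zero]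
      have e2 : ∑ j ∈ univ.filter (fun j => i < j), α j * |p j - pstar j|
          ≤ ∑ j ∈ univ.filter (fun j => i < j), α j * (Pmax j - pstar j) :=
        Finset.sum_le_sum fun j _ => by
          rw [abs_of_nonneg (sub_nonneg.2 (hge j))]
          exact mul_le_mul_of_nonneg_left (by linarith [(hp j).2]) (hα0 j)
      linarith
    have hEK : E + n i ≤ ∑ j ∈ univ.filter (fun j => j < i), h i j * pstar j
        + ∑ j ∈ univ.filter (fun j => i < j), h i j * Pmax j + n i := by
      rw [hE, erase_split i]
      have e1 : ∑ j ∈ univ.filter (fun j => j < i), h i j * p j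
          = ∑ j ∈ univ.filter (fun j => j < i), h i j * pstar j :=
        Finset.sum_congr rfl fun j hj => by rw [hminp j (by simpa using hj)]
      have e2 : ∑ j ∈ univ.filter (fun j => i < j), h i j * p j
          ≤ ∑ j ∈ univ.filter (fun j => i < j), h i j * Pmax j :=
        Finset.sum_le_sum fun j _ => mul_le_mul_of_nonneg_left (hp j).2 (hh i j).le
      linarith
    rcases le_or_gt (α i * (p i - pstar i) + Sm) P0 with hcap | hcap
    · -- no truncation
      have hα_nn : 0 ≤ α i * (p i - pstar i) :=
        mul_nonneg (hα0 i) (sub_pos.2 hilt).le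
      rw [min_eq_left hcap, min_eq_left (by linarith : Sm ≤ P0)] at hne
      have d2pos : 0 < h0 i * Sm + E + n i := by
        nlinarith [mul_nonneg (hh0 i).le hSm0, hn i]
      have d1pos : 0 < h0 i * (α i * (p i - pstar i) + Sm) + E + n i := by
        nlinarith [mul_nonneg (hh0 i).le (by linarith : (0:ℝ) ≤ α i * (p i - pstar i) + Sm), hn i]
      rw [div_le_div_iff₀ d2pos d1pos] at hne
      have hgap : h0 i * Sm + (E + n i) < α i * (pstar i * h0 i) := by
        have := key1 i hi
        have := mul_le_mul_of_nonneg_left hSA (hh0 i).le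
        linarith
      have hprod := mul_pos (mul_pos (hh i i) (sub_pos.2 hilt)) (sub_pos.2 hgap)
      linarith [hprod]
    · -- truncation active
      rw [min_eq_right hcap.le] at hne
      have hm20 : 0 ≤ min Sm P0 := le_min hSm0 hP0.le
      have d2pos : 0 < h0 i * min Sm P0 + E + n i := by
        nlinarith [mul_nonneg (hh0 i).le hm20, hn i]
      have d1pos : 0 < h0 i * P0 + E + n i := by
        nlinarith [mul_pos (hh0 i) hP0, hn i]
      rw [div_le_div_iff₀ d2pos d1pos] at hne
      have h1 : p i * min Sm P0
          ≤ Pmax i * ∑ j ∈ univ.filter (fun j => i < j), α j * (Pmax j - pstar j) :=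
        calc p i * min Sm P0 ≤ Pmax i * min Sm P0 :=
              mul_le_mul_of_nonneg_right (hp i).2 hm20
          _ ≤ Pmax i * Sm := mul_le_mul_of_nonneg_left (min_le_left _ _) (hP i).le
          _ ≤ _ := mul_le_mul_of_nonneg_left hSA (hP i).le
      have h2 : (p i - pstar i) * (E + n i)
          ≤ (Pmax i - pstar i) * (∑ j ∈ univ.filter (fun j => j < i), h i j * pstar j
              + ∑ j ∈ univ.filter (fun j => i < j), h i j * Pmax j + n i) :=
        mul_le_mul (by linarith [(hp i).2]) hEK hEn.le (by linarith)
      have h3 : h0 i * (p i * min Sm P0) + (p i - pstar i) * (E + n i)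
          < P0 * (pstar i * h0 i) := by
        have := key2 i hi
        have := mul_le_mul_of_nonneg_left h1 (hh0 i).le
        linarith
      linarith [mul_lt_mul_of_pos_left h3 (hh i i)]
end

section
/- For any target profile p* ∈ ∏_i (0,P_i] with Σ_{i=1}^N (P_i - p_i*)/P_i < 1, there exists a vector of nonnegative intervention rates (α_1,...,α_N) such that α_i > (1/p_i*) Σ_{j≠i} α_j (P_j - p_j*) + (Σ_{j≠i} h_ij P_j + n_i)/(p_i* h_{i0}) for every user i with p_i* < P_i. -/
open Finset

/-- For any target `p* ∈ ∏_i (0, P_i]` with `∑_i (P_i - p_i*)/P_i < 1`, there exist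
nonnegative intervention rates solving the system of strict linear inequalities. -/
theorem stmt6 (N : ℕ) (h : Fin N → Fin N → ℝ) (h0 n Pmax pstar : Fin N → ℝ)
    (hh : ∀ i j, 0 < h i j) (hh0 : ∀ i, 0 < h0 i) (hn : ∀ i, 0 < n i)
    (hP : ∀ i, 0 < Pmax i) (hp1 : ∀ i, 0 < pstar i) (hp2 : ∀ i, pstar i ≤ Pmax i)
    (hsum : ∑ i, (Pmax i - pstar i) / Pmax i < 1) :
    ∃ α : Fin N → ℝ, (∀ i, 0 ≤ α i) ∧
      ∀ i : Fin N, pstar i < Pmax i →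
        (1 / pstar i) * ∑ j ∈ univ.erase i, α j * (Pmax j - pstar j)
          + (∑ j ∈ univ.erase i, h i j * Pmax j + n i) / (pstar i * h0 i) < α i := by
  set t : Fin N → ℝ := fun j => (Pmax j - pstar j) / Pmax j with ht
  set c : Fin N → ℝ := fun i =>
    (∑ j ∈ univ.erase i, h i j * Pmax j + n i) / (pstar i * h0 i) with hc
  have hc0 : ∀ i, 0 < c i := by
    intro i
    apply div_pos
    · have : 0 ≤ ∑ j ∈ univ.erase i, h i j * Pmax j :=
        Finset.sum_nonneg fun j _ => le_of_lt (mul_pos (hh i j) (hP j))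
      linarith [hn i]
    · exact mul_pos (hp1 i) (hh0 i)
  set δ : ℝ := 1 - ∑ j, t j with hδdef
  have hδ : 0 < δ := by simp [hδdef]; linarith [hsum]
  set K : ℝ := (∑ i, pstar i * c i) / δ + 1 with hK
  have hsum0 : 0 ≤ ∑ i, pstar i * c i :=
    Finset.sum_nonneg fun i _ => le_of_lt (mul_pos (hp1 i) (hc0 i))
  have hK0 : 0 < K := by
    have h1 := div_nonneg hsum0 (le_of_lt hδ)
    rw [hK]; linarith
  refine ⟨fun i => K / Pmax i, fun i => le_of_lt (div_pos hK0 (hP i)), ?_⟩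
  intro i hi
  have hsum1 : ∑ j ∈ univ.erase i, (K / Pmax j) * (Pmax j - pstar j)
      = K * ((∑ j, t j) - t i) := by
    rw [← Finset.sum_erase_eq_sub (Finset.mem_univ i), Finset.mul_sum]
    apply Finset.sum_congr rfl
    intro j _
    show K / Pmax j * (Pmax j - pstar j) = K * ((Pmax j - pstar j) / Pmax j)
    field_simp
  rw [hsum1]
  have key : pstar i * c i < K * δ := by
    have h1 : pstar i * c i ≤ ∑ j, pstar j * c j :=
      Finset.single_le_sum (fun j _ => le_of_lt (mul_pos (hp1 j) (hc0 j)))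
        (Finset.mem_univ i)
    have h2 : K * δ = (∑ j, pstar j * c j) + δ := by
      rw [hK]; field_simp
    linarith
  have hpi := hp1 i
  have hPi := hP i
  have h1 : (∑ j, t j) - t i = pstar i / Pmax i - δ := by
    have h2 : t i = (Pmax i - pstar i) / Pmax i := rfl
    rw [hδdef, h2]
    field_simp
    ring
  rw [h1]
  show 1 / pstar i * (K * (pstar i / Pmax i - δ)) + c i < K / Pmax i
  have h3 : K / Pmax i - (1 / pstar i * (K * (pstar i / Pmax i - δ)) + c i)
      = (K * δ - pstar i * c i) / pstar i := by
    field_simp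
    ring
  have h4 : 0 < (K * δ - pstar i * c i) / pstar i :=
    div_pos (by linarith) hpi
  linarith
end

section
/- (Theorem 3, sustainment part) Suppose Σ_{i=1}^N (P_i - p_i*)/P_i < 1 and the rates α_i satisfy α_i > (1/p_i*) Σ_{j≠i} α_j (P_j - p_j*) + (Σ_{j≠i} h_ij P_j + n_i)/(p_i* h_{i0}) and P_0 > (P_i/p_i*) Σ_{j≠i} α_j (P_j - p_j*) + (P_i - p_i*)(Σ_{j≠i} h_ij P_j + n_i)/(p_i* h_{i0}) for all i with p_i* < P_i. Then under the first-order intervention rule f(p) = [Σ_i α_i |p_i - p_i*|]_0^{P_0}, the target p* is the unique Nash equilibrium; moreover p_i* is a best response of user i to any opponent profile p_{-i} ∈ ∏_{j≠i}[p_j*, P_j]. -/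
open Finset

lemma sinr_update {N : ℕ} (h : Fin N → Fin N → ℝ) (h0 n α pstar : Fin N → ℝ)
    (P0 : ℝ) (i : Fin N) (p : Fin N → ℝ) (q : ℝ) :
    sinr h h0 n α pstar P0 i (Function.update p i q) =
      h i i * q /
        (h0 i * min (α i * |q - pstar i| + ∑ j ∈ univ.erase i, α j * |p j - pstar j|) P0
          + ∑ j ∈ univ.erase i, h i j * p j + n i) := by
  have e1 : ∑ j, α j * |Function.update p i q j - pstar j|
      = α i * |q - pstar i| + ∑ j ∈ univ.erase i, α j * |p j - pstar j| := by
    rw [← Finset.add_sum_erase univ (fun j => α j * |Function.update p i q j - pstar j|)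
      (mem_univ i), Function.update_self]
    congr 1
    exact Finset.sum_congr rfl fun j hj => by
      rw [Function.update_of_ne (Finset.ne_of_mem_erase hj)]
  have e2 : ∑ j ∈ univ.erase i, h i j * Function.update p i q j
      = ∑ j ∈ univ.erase i, h i j * p j :=
    Finset.sum_congr rfl fun j hj => by
      rw [Function.update_of_ne (Finset.ne_of_mem_erase hj)]
  simp only [sinr, intv, Function.update_self, e1, e2]

lemma sinr_low {N : ℕ} (h : Fin N → Fin N → ℝ) (h0 n α pstar : Fin N → ℝ) (P0 : ℝ)
    (hh : ∀ i j, 0 < h i j) (hh0 : ∀ i, 0 < h0 i) (hn : ∀ i, 0 < n i)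
    (hα0 : ∀ i, 0 ≤ α i) (hP0 : 0 < P0)
    (i : Fin N) (p : Fin N → ℝ) (hp : ∀ j, j ≠ i → 0 ≤ p j)
    (q : ℝ) (hq0 : 0 ≤ q) (hq : q < pstar i) :
    sinr h h0 n α pstar P0 i (Function.update p i q) <
      sinr h h0 n α pstar P0 i (Function.update p i (pstar i)) := by
  rw [sinr_update, sinr_update]
  set S := ∑ j ∈ univ.erase i, α j * |p j - pstar j| with hS
  set I := ∑ j ∈ univ.erase i, h i j * p j with hI
  have hS0 : 0 ≤ S := Finset.sum_nonneg fun j _ => mul_nonneg (hα0 j) (abs_nonneg _)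
  have hI0 : 0 ≤ I := Finset.sum_nonneg fun j hj =>
    mul_nonneg (hh i j).le (hp j (Finset.ne_of_mem_erase hj))
  have habs0 : |pstar i - pstar i| = (0:ℝ) := by simp
  rw [habs0]
  have hm0 : (0:ℝ) ≤ min (α i * 0 + S) P0 := le_min (by nlinarith [hα0 i]) hP0.le
  have hmq0 : (0:ℝ) ≤ min (α i * |q - pstar i| + S) P0 :=
    le_min (add_nonneg (mul_nonneg (hα0 i) (abs_nonneg _)) hS0) hP0.le
  have hmono : min (α i * 0 + S) P0 ≤ min (α i * |q - pstar i| + S) P0 := by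
    apply min_le_min _ le_rfl
    nlinarith [mul_nonneg (hα0 i) (abs_nonneg (q - pstar i))]
  have hDp : 0 < h0 i * min (α i * 0 + S) P0 + I + n i := by
    nlinarith [mul_nonneg (hh0 i).le hm0, hn i]
  have hDq : 0 < h0 i * min (α i * |q - pstar i| + S) P0 + I + n i := by
    nlinarith [mul_nonneg (hh0 i).le hmq0, hn i]
  rw [div_lt_div_iff₀ hDq hDp]
  have hDle : h0 i * min (α i * 0 + S) P0 + I + n i
      ≤ h0 i * min (α i * |q - pstar i| + S) P0 + I + n i := by
    nlinarith [mul_le_mul_of_nonneg_left hmono (hh0 i).le]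
  nlinarith [mul_pos (hh i i) hDp, mul_le_mul_of_nonneg_left hDle
    (mul_nonneg (hh i i).le hq0), mul_lt_mul_of_pos_right
    (mul_lt_mul_of_pos_left hq (hh i i)) hDp]

set_option maxHeartbeats 800000 in
lemma sinr_high {N : ℕ} (h : Fin N → Fin N → ℝ) (h0 n Pmax pstar α : Fin N → ℝ) (P0 : ℝ)
    (hh : ∀ i j, 0 < h i j) (hh0 : ∀ i, 0 < h0 i) (hn : ∀ i, 0 < n i)
    (hp1 : ∀ i, 0 < pstar i) (hp2 : ∀ i, pstar i ≤ Pmax i)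
    (hα0 : ∀ i, 0 ≤ α i) (hP0 : 0 < P0)
    (hα : ∀ i : Fin N, pstar i < Pmax i →
      (1 / pstar i) * ∑ j ∈ univ.erase i, α j * (Pmax j - pstar j)
        + (∑ j ∈ univ.erase i, h i j * Pmax j + n i) / (pstar i * h0 i) < α i)
    (hP0c : ∀ i : Fin N, pstar i < Pmax i →
      (Pmax i / pstar i) * ∑ j ∈ univ.erase i, α j * (Pmax j - pstar j)
        + (Pmax i - pstar i) * (∑ j ∈ univ.erase i, h i j * Pmax j + n i) /
          (pstar i * h0 i) < P0)
    (i : Fin N) (p : Fin N → ℝ) (hp : ∀ j, j ≠ i → pstar j ≤ p j ∧ p j ≤ Pmax j)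
    (q : ℝ) (hq : pstar i < q) (hq1 : q ≤ Pmax i) :
    sinr h h0 n α pstar P0 i (Function.update p i q) <
      sinr h h0 n α pstar P0 i (Function.update p i (pstar i)) := by
  have hpi : pstar i < Pmax i := lt_of_lt_of_le hq hq1
  rw [sinr_update, sinr_update]
  set S := ∑ j ∈ univ.erase i, α j * |p j - pstar j| with hSdef
  set I := ∑ j ∈ univ.erase i, h i j * p j with hIdef
  set Sb := ∑ j ∈ univ.erase i, α j * (Pmax j - pstar j) with hSbdef
  set Ib := ∑ j ∈ univ.erase i, h i j * Pmax j with hIbdef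
  have hS0 : 0 ≤ S := Finset.sum_nonneg fun j _ => mul_nonneg (hα0 j) (abs_nonneg _)
  have hI0 : 0 ≤ I := Finset.sum_nonneg fun j hj => mul_nonneg (hh i j).le
    ((hp1 j).le.trans (hp j (Finset.ne_of_mem_erase hj)).1)
  have hSSb : S ≤ Sb := Finset.sum_le_sum fun j hj => by
    have hj' := hp j (Finset.ne_of_mem_erase hj)
    rw [abs_of_nonneg (sub_nonneg.2 hj'.1)]
    exact mul_le_mul_of_nonneg_left (by linarith [hj'.2]) (hα0 j)
  have hIIb : I ≤ Ib := Finset.sum_le_sum fun j hj =>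
    mul_le_mul_of_nonneg_left (hp j (Finset.ne_of_mem_erase hj)).2 (hh i j).le
  -- cleared-denominator forms of the rate/capability hypotheses
  have hpih0 : 0 < pstar i * h0 i := mul_pos (hp1 i) (hh0 i)
  have hps : pstar i ≠ 0 := (hp1 i).ne'
  have hh0' : h0 i ≠ 0 := (hh0 i).ne'
  have key1 : h0 i * Sb + (Ib + n i) < α i * (pstar i * h0 i) := by
    have h2 := mul_lt_mul_of_pos_left (hα i hpi) hpih0
    have h3 : pstar i * h0 i * ((1 / pstar i) * Sb + (Ib + n i) / (pstar i * h0 i))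
        = h0 i * Sb + (Ib + n i) := by
      field_simp
    rw [h3] at h2
    linarith
  have key2 : Pmax i * (h0 i * Sb) + (Pmax i - pstar i) * (Ib + n i)
      < pstar i * h0 i * P0 := by
    have h2 := mul_lt_mul_of_pos_left (hP0c i hpi) hpih0
    have h3 : pstar i * h0 i * ((Pmax i / pstar i) * Sb
        + (Pmax i - pstar i) * (Ib + n i) / (pstar i * h0 i))
        = Pmax i * (h0 i * Sb) + (Pmax i - pstar i) * (Ib + n i) := by
      field_simp
    rw [h3] at h2
    linarith
  have habsq : |q - pstar i| = q - pstar i := abs_of_nonneg (by linarith)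
  have habs0 : |pstar i - pstar i| = (0:ℝ) := by simp
  rw [habsq, habs0]
  have hm0 : (0:ℝ) ≤ min (α i * 0 + S) P0 := le_min (by nlinarith [hα0 i]) hP0.le
  have hmq0 : (0:ℝ) ≤ min (α i * (q - pstar i) + S) P0 :=
    le_min (add_nonneg (mul_nonneg (hα0 i) (by linarith)) hS0) hP0.le
  have hDp : 0 < h0 i * min (α i * 0 + S) P0 + I + n i := by
    nlinarith [mul_nonneg (hh0 i).le hm0, hn i]
  have hDq : 0 < h0 i * min (α i * (q - pstar i) + S) P0 + I + n i := by
    nlinarith [mul_nonneg (hh0 i).le hmq0, hn i]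
  rw [div_lt_div_iff₀ hDq hDp]
  have hmain : q * (h0 i * min (α i * 0 + S) P0 + I + n i)
      < pstar i * (h0 i * min (α i * (q - pstar i) + S) P0 + I + n i) := by
    rcases le_total (α i * (q - pstar i) + S) P0 with h1 | h1
    · rw [min_eq_left h1, min_eq_left (by nlinarith [mul_nonneg (hα0 i) (sub_nonneg.2 hq.le)] :
        α i * 0 + S ≤ P0)]
      have hd : h0 i * S + I + n i < α i * pstar i * h0 i := by
        nlinarith [mul_le_mul_of_nonneg_left hSSb (hh0 i).le]
      nlinarith [mul_lt_mul_of_pos_right hd (sub_pos.mpr hq)]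
    · rw [min_eq_right h1]
      have hm0S : min (α i * 0 + S) P0 ≤ S := by
        simpa using min_le_left (α i * 0 + S) P0
      have hPi0 : (0:ℝ) < Pmax i := (hp1 i).trans hpi
      have c1 : q * (h0 i * min (α i * 0 + S) P0 + I + n i)
          ≤ Pmax i * (h0 i * S + I + n i) := by
        apply mul_le_mul hq1 _ (by nlinarith [mul_nonneg (hh0 i).le hm0, hn i]) hPi0.le
        nlinarith [mul_le_mul_of_nonneg_left hm0S (hh0 i).le]
      have t1 : Pmax i * (h0 i * S) ≤ Pmax i * (h0 i * Sb) :=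
        mul_le_mul_of_nonneg_left (mul_le_mul_of_nonneg_left hSSb (hh0 i).le) hPi0.le
      have t2 : (Pmax i - pstar i) * (I + n i) ≤ (Pmax i - pstar i) * (Ib + n i) :=
        mul_le_mul_of_nonneg_left (by linarith) (sub_nonneg.2 hpi.le)
      have c2 : Pmax i * (h0 i * S + I + n i) < pstar i * (h0 i * P0 + I + n i) := by
        nlinarith [t1, t2, key2]
      linarith
  linarith [mul_lt_mul_of_pos_left hmain (hh i i), (by ring : h i i * (q * (h0 i * min (α i * 0 + S) P0 + I + n i)) = h i i * q * (h0 i * min (α i * 0 + S) P0 + I + n i)), (by ring : h i i * (pstar i * (h0 i * min (α i * (q - pstar i) + S) P0 + I + n i)) = h i i * pstar i * (h0 i * min (α i * (q - pstar i) + S) P0 + I + n i))]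

/-- Theorem 3, sustainment part: under the stated strict bounds on the rates and
the capability and `∑_i (P_i - p_i*)/P_i < 1`, the target `p*` is the unique Nash
equilibrium; moreover `p_i*` is a best response of user `i` to any opponent
profile in `∏_{j≠i} [p_j*, P_j]`. -/
theorem stmt7 (N : ℕ) (h : Fin N → Fin N → ℝ) (h0 n Pmax pstar α : Fin N → ℝ)
    (P0 : ℝ)
    (hh : ∀ i j, 0 < h i j) (hh0 : ∀ i, 0 < h0 i) (hn : ∀ i, 0 < n i)
    (hP : ∀ i, 0 < Pmax i) (hp1 : ∀ i, 0 < pstar i) (hp2 : ∀ i, pstar i ≤ Pmax i)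
    (hα0 : ∀ i, 0 ≤ α i) (hP0 : 0 < P0)
    (hsum : ∑ i, (Pmax i - pstar i) / Pmax i < 1)
    (hα : ∀ i : Fin N, pstar i < Pmax i →
      (1 / pstar i) * ∑ j ∈ univ.erase i, α j * (Pmax j - pstar j)
        + (∑ j ∈ univ.erase i, h i j * Pmax j + n i) / (pstar i * h0 i) < α i)
    (hP0c : ∀ i : Fin N, pstar i < Pmax i →
      (Pmax i / pstar i) * ∑ j ∈ univ.erase i, α j * (Pmax j - pstar j)
        + (Pmax i - pstar i) * (∑ j ∈ univ.erase i, h i j * Pmax j + n i) /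
          (pstar i * h0 i) < P0) :
    (isNE Pmax (sinr h h0 n α pstar P0) pstar ∧
      ∀ p : Fin N → ℝ, (∀ i, 0 ≤ p i ∧ p i ≤ Pmax i) →
        isNE Pmax (sinr h h0 n α pstar P0) p → p = pstar) ∧
    (∀ i : Fin N, ∀ p : Fin N → ℝ,
      (∀ j, j ≠ i → pstar j ≤ p j ∧ p j ≤ Pmax j) →
      ∀ q, 0 ≤ q → q ≤ Pmax i →
        sinr h h0 n α pstar P0 i (Function.update p i q) ≤
        sinr h h0 n α pstar P0 i (Function.update p i (pstar i))) := by

  have BR : ∀ i : Fin N, ∀ p : Fin N → ℝ,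
      (∀ j, j ≠ i → pstar j ≤ p j ∧ p j ≤ Pmax j) →
      ∀ q, 0 ≤ q → q ≤ Pmax i →
        sinr h h0 n α pstar P0 i (Function.update p i q) ≤
        sinr h h0 n α pstar P0 i (Function.update p i (pstar i)) := by
    intro i p hp q hq0 hq1
    rcases lt_trichotomy q (pstar i) with hlt | heq | hgt
    · exact (sinr_low h h0 n α pstar P0 hh hh0 hn hα0 hP0 i p
        (fun j hj => (hp1 j).le.trans (hp j hj).1) q hq0 hlt).le
    · rw [heq]
    · exact (sinr_high h h0 n Pmax pstar α P0 hh hh0 hn hp1 hp2 hα0 hP0 hα hP0c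
        i p hp q hgt hq1).le
  refine ⟨⟨?_, ?_⟩, BR⟩
  · intro i q hq0 hq1
    have := BR i pstar (fun j _ => ⟨le_rfl, hp2 j⟩) q hq0 hq1
    rwa [Function.update_eq_self] at this
  · intro p hbox hNE
    have hge : ∀ i, pstar i ≤ p i := by
      intro i
      by_contra hcon
      push_neg at hcon
      have h1 := hNE i (pstar i) (hp1 i).le (hp2 i)
      have h2 := sinr_low h h0 n α pstar P0 hh hh0 hn hα0 hP0 i p
        (fun j _ => (hbox j).1) (p i) (hbox i).1 hcon
      rw [Function.update_eq_self] at h2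
      linarith
    funext i
    by_contra hcon
    have hgt : pstar i < p i := lt_of_le_of_ne (hge i) (Ne.symm hcon)
    have h1 := hNE i (pstar i) (hp1 i).le (hp2 i)
    have h2 := sinr_high h h0 n Pmax pstar α P0 hh hh0 hn hp1 hp2 hα0 hP0 hα hP0c
      i p (fun j _ => ⟨hge j, (hbox j).2⟩) (p i) hgt (hbox i).2
    rw [Function.update_eq_self] at h2
    linarith
end

section
/- (Theorem 3, convergence part) Under the hypotheses of Theorem 3 (with conditions on α_i and P_0 as stated and Σ_i (P_i - p_i*)/P_i < 1), the best-response dynamics p_i^t ∈ argmax_{p_i ∈ [0,P_i]} γ_i(f(p_i, p^{t-1}_{-i}), p_i, p^{t-1}_{-i}) starting from any initial profile p^0 reaches p* in at most two steps; if p^0 ∈ ∏_i [p_i*, P_i], it reaches p* in one step. -/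
open Finset

lemma sinr_update_eq {N : ℕ} (h : Fin N → Fin N → ℝ) (h0 n α pstar : Fin N → ℝ)
    (P0 : ℝ) (p : Fin N → ℝ) (i : Fin N) (q : ℝ) :
    sinr h h0 n α pstar P0 i (Function.update p i q)
      = h i i * q /
        (h0 i * min (α i * |q - pstar i| + ∑ j ∈ univ.erase i, α j * |p j - pstar j|) P0
          + ∑ j ∈ univ.erase i, h i j * p j + n i) := by
  have h2 : ∀ j ∈ univ.erase i, Function.update p i q j = p j := fun j hj =>
    Function.update_of_ne (Finset.ne_of_mem_erase hj) _ _
  unfold sinr intv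
  simp only [Function.update_self]
  have h3 : (∑ j, α j * |Function.update p i q j - pstar j|)
      = α i * |q - pstar i| + ∑ j ∈ univ.erase i, α j * |p j - pstar j| := by
    rw [← Finset.sum_erase_add _ _ (Finset.mem_univ i), Function.update_self, add_comm]
    congr 1
    exact Finset.sum_congr rfl fun j hj => by rw [h2 j hj]
  have h4 : (∑ j ∈ univ.erase i, h i j * Function.update p i q j)
      = ∑ j ∈ univ.erase i, h i j * p j :=
    Finset.sum_congr rfl fun j hj => by rw [h2 j hj]
  rw [h3, h4]

lemma key {N : ℕ} (h : Fin N → Fin N → ℝ) (h0 n Pmax pstar α : Fin N → ℝ) (P0 : ℝ)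
    (hh : ∀ i j, 0 < h i j) (hh0 : ∀ i, 0 < h0 i) (hn : ∀ i, 0 < n i)
    (hP : ∀ i, 0 < Pmax i) (hp1 : ∀ i, 0 < pstar i) (hp2 : ∀ i, pstar i ≤ Pmax i)
    (hα0 : ∀ i, 0 ≤ α i) (hP0 : 0 < P0)
    (hα : ∀ i : Fin N, pstar i < Pmax i →
      (1 / pstar i) * ∑ j ∈ univ.erase i, α j * (Pmax j - pstar j)
        + (∑ j ∈ univ.erase i, h i j * Pmax j + n i) / (pstar i * h0 i) < α i)
    (hP0c : ∀ i : Fin N, pstar i < Pmax i →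
      (Pmax i / pstar i) * ∑ j ∈ univ.erase i, α j * (Pmax j - pstar j)
        + (Pmax i - pstar i) * (∑ j ∈ univ.erase i, h i j * Pmax j + n i) /
          (pstar i * h0 i) < P0)
    (p : Fin N → ℝ) (hnn : ∀ j, 0 ≤ p j) (i : Fin N) :
    (∀ q, 0 ≤ q → q < pstar i →
      sinr h h0 n α pstar P0 i (Function.update p i q)
        < sinr h h0 n α pstar P0 i (Function.update p i (pstar i)))
    ∧ ((∀ j, p j ≤ Pmax j) → (∀ j, pstar j ≤ p j) → ∀ q, 0 ≤ q → q ≤ Pmax i → q ≠ pstar i →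
      sinr h h0 n α pstar P0 i (Function.update p i q)
        < sinr h h0 n α pstar P0 i (Function.update p i (pstar i))) := by
  set S := ∑ j ∈ univ.erase i, α j * |p j - pstar j| with hSdef
  set C := ∑ j ∈ univ.erase i, h i j * p j with hCdef
  have hS : 0 ≤ S := Finset.sum_nonneg fun j _ => mul_nonneg (hα0 j) (abs_nonneg _)
  have hC : 0 ≤ C := Finset.sum_nonneg fun j _ => mul_nonneg (hh i j).le (hnn j)
  have hDpos : ∀ x : ℝ, 0 ≤ x → 0 < h0 i * min x P0 + C + n i := by
    intro x hx
    have hm : 0 ≤ min x P0 := le_min hx hP0.le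
    linarith [mul_nonneg (hh0 i).le hm, hn i]
  have hps : pstar i ≠ 0 := (hp1 i).ne'
  have hh0n : h0 i ≠ 0 := (hh0 i).ne'
  have Estar : sinr h h0 n α pstar P0 i (Function.update p i (pstar i))
      = h i i * pstar i / (h0 i * min S P0 + C + n i) := by
    rw [sinr_update_eq]
    simp only [sub_self, abs_zero, mul_zero, zero_add]
    rfl
  -- Part 1
  have part1 : ∀ q, 0 ≤ q → q < pstar i →
      sinr h h0 n α pstar P0 i (Function.update p i q)
        < sinr h h0 n α pstar P0 i (Function.update p i (pstar i)) := by
    intro q hq0 hq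
    rw [sinr_update_eq, Estar, ← hSdef, ← hCdef]
    have habs : |q - pstar i| = pstar i - q := by
      rw [abs_of_nonpos (by linarith)]; ring
    rw [habs]
    have hx : 0 ≤ α i * (pstar i - q) + S := by
      linarith [mul_nonneg (hα0 i) (by linarith : (0:ℝ) ≤ pstar i - q)]
    have hD1 := hDpos _ hx
    have hD2 := hDpos _ hS
    rw [div_lt_div_iff₀ hD1 hD2]
    have hmono : min S P0 ≤ min (α i * (pstar i - q) + S) P0 :=
      min_le_min (by linarith [mul_nonneg (hα0 i) (by linarith : (0:ℝ) ≤ pstar i - q)]) le_rfl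
    have hnum : h i i * q < h i i * pstar i := mul_lt_mul_of_pos_left hq (hh i i)
    have hnum0 : 0 ≤ h i i * q := mul_nonneg (hh i i).le hq0
    linarith [mul_le_mul_of_nonneg_left (mul_le_mul_of_nonneg_left hmono (hh0 i).le)
        hnum0, mul_lt_mul_of_pos_right hnum hD1]
  refine ⟨part1, ?_⟩
  intro hub hlb q hq0 hqP hqne
  rcases lt_or_gt_of_ne hqne with hlt | hgt
  · exact part1 q hq0 hlt
  -- q > pstar i
  have hiPP : pstar i < Pmax i := lt_of_lt_of_le hgt hqP
  set Sb := ∑ j ∈ univ.erase i, α j * (Pmax j - pstar j) with hSbdef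
  set Cb := ∑ j ∈ univ.erase i, h i j * Pmax j with hCbdef
  have hSSb : S ≤ Sb := by
    apply Finset.sum_le_sum
    intro j _
    have habs : |p j - pstar j| = p j - pstar j := abs_of_nonneg (by linarith [hlb j])
    rw [habs]
    exact mul_le_mul_of_nonneg_left (by linarith [hub j]) (hα0 j)
  have hCCb : C ≤ Cb := by
    apply Finset.sum_le_sum
    intro j _
    exact mul_le_mul_of_nonneg_left (hub j) (hh i j).le
  have hSb : 0 ≤ Sb := le_trans hS hSSb
  have hCb : 0 ≤ Cb := le_trans hC hCCb
  have hph : 0 < pstar i * h0 i := mul_pos (hp1 i) (hh0 i)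
  have key1 : h0 i * Sb + (Cb + n i) < pstar i * h0 i * α i := by
    have e1 : (pstar i * h0 i) * ((1 / pstar i) * Sb + (Cb + n i) / (pstar i * h0 i))
        = h0 i * Sb + (Cb + n i) := by
      field_simp
    have hm := mul_lt_mul_of_pos_left (hα i hiPP) hph
    rw [e1] at hm
    exact hm
  have key2 : h0 i * (Pmax i * Sb) + (Pmax i - pstar i) * (Cb + n i)
      < pstar i * h0 i * P0 := by
    have e2 : (pstar i * h0 i) * ((Pmax i / pstar i) * Sb
          + (Pmax i - pstar i) * (Cb + n i) / (pstar i * h0 i))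
        = h0 i * (Pmax i * Sb) + (Pmax i - pstar i) * (Cb + n i) := by
      field_simp
    have hm := mul_lt_mul_of_pos_left (hP0c i hiPP) hph
    rw [e2] at hm
    exact hm
  have t2 : 0 ≤ (Pmax i - pstar i) * (Cb + n i) :=
    mul_nonneg (by linarith) (by linarith [hn i])
  have t3 : pstar i * (h0 i * Sb) < pstar i * (h0 i * P0) := by
    nlinarith [t2, key2, mul_le_mul_of_nonneg_right
      (mul_le_mul_of_nonneg_left (hp2 i) (hh0 i).le) hSb]
  have t4 : h0 i * Sb < h0 i * P0 := lt_of_mul_lt_mul_left t3 (hp1 i).le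
  have hSbP0 : Sb < P0 := lt_of_mul_lt_mul_left t4 (hh0 i).le
  have hSP0 : S < P0 := lt_of_le_of_lt hSSb hSbP0
  rw [sinr_update_eq, Estar, ← hSdef, ← hCdef]
  rw [min_eq_left hSP0.le]
  have habs : |q - pstar i| = q - pstar i := abs_of_nonneg (by linarith)
  rw [habs]
  have hx : 0 ≤ α i * (q - pstar i) + S := by
    linarith [mul_nonneg (hα0 i) (by linarith : (0:ℝ) ≤ q - pstar i)]
  have hD1 := hDpos _ hx
  have hD2 : 0 < h0 i * S + C + n i := by linarith [mul_nonneg (hh0 i).le hS, hn i]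
  rw [div_lt_div_iff₀ hD1 hD2]
  rcases min_cases (α i * (q - pstar i) + S) P0 with ⟨hmin, hle⟩ | ⟨hmin, hlt2⟩
  · rw [hmin]
    have hd : h0 i * S + C + n i < pstar i * h0 i * α i := by
      linarith [key1, hCCb, mul_le_mul_of_nonneg_left hSSb (hh0 i).le]
    linarith [mul_pos (mul_pos (hh i i) (by linarith : (0:ℝ) < q - pstar i))
      (by linarith : (0:ℝ) < pstar i * h0 i * α i - (h0 i * S + C + n i))]
  · rw [hmin]
    have h1' : Pmax i * (h0 i * S) ≤ Pmax i * (h0 i * Sb) :=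
      mul_le_mul_of_nonneg_left (mul_le_mul_of_nonneg_left hSSb (hh0 i).le) (hP i).le
    have h2' : (Pmax i - pstar i) * (C + n i) ≤ (Pmax i - pstar i) * (Cb + n i) :=
      mul_le_mul_of_nonneg_left (by linarith) (by linarith)
    have hPineq : Pmax i * (h0 i * S + C + n i) < pstar i * (h0 i * P0 + C + n i) := by
      linarith [key2, h1', h2']
    have h3' : q * (h0 i * S + C + n i) ≤ Pmax i * (h0 i * S + C + n i) :=
      mul_le_mul_of_nonneg_right hqP hD2.le
    linarith [mul_lt_mul_of_pos_left hPineq (hh i i),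
      mul_le_mul_of_nonneg_left h3' (hh i i).le]

/-- Theorem 3, convergence part: under the hypotheses of Theorem 3, the
best-response dynamics starting from any feasible initial profile reaches `p*` in
at most two steps, and in one step if the initial profile lies in
`∏_i [p_i*, P_i]`. -/
theorem stmt8 (N : ℕ) (h : Fin N → Fin N → ℝ) (h0 n Pmax pstar α : Fin N → ℝ)
    (P0 : ℝ)
    (hh : ∀ i j, 0 < h i j) (hh0 : ∀ i, 0 < h0 i) (hn : ∀ i, 0 < n i)
    (hP : ∀ i, 0 < Pmax i) (hp1 : ∀ i, 0 < pstar i) (hp2 : ∀ i, pstar i ≤ Pmax i)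
    (hα0 : ∀ i, 0 ≤ α i) (hP0 : 0 < P0)
    (hsum : ∑ i, (Pmax i - pstar i) / Pmax i < 1)
    (hα : ∀ i : Fin N, pstar i < Pmax i →
      (1 / pstar i) * ∑ j ∈ univ.erase i, α j * (Pmax j - pstar j)
        + (∑ j ∈ univ.erase i, h i j * Pmax j + n i) / (pstar i * h0 i) < α i)
    (hP0c : ∀ i : Fin N, pstar i < Pmax i →
      (Pmax i / pstar i) * ∑ j ∈ univ.erase i, α j * (Pmax j - pstar j)
        + (Pmax i - pstar i) * (∑ j ∈ univ.erase i, h i j * Pmax j + n i) /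
          (pstar i * h0 i) < P0)
    -- best-response dynamics
    (p : ℕ → Fin N → ℝ)
    (hbox0 : ∀ i, 0 ≤ p 0 i ∧ p 0 i ≤ Pmax i)
    (hBR : ∀ t : ℕ, ∀ i : Fin N,
      0 ≤ p (t + 1) i ∧ p (t + 1) i ≤ Pmax i ∧
      ∀ q, 0 ≤ q → q ≤ Pmax i →
        sinr h h0 n α pstar P0 i (Function.update (p t) i q) ≤
        sinr h h0 n α pstar P0 i (Function.update (p t) i (p (t + 1) i))) :
    p 2 = pstar ∧ ((∀ i, pstar i ≤ p 0 i) → p 1 = pstar) := by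
  have hbox : ∀ t i, 0 ≤ p t i ∧ p t i ≤ Pmax i := by
    intro t
    cases t with
    | zero => exact hbox0
    | succ t => exact fun i => ⟨(hBR t i).1, (hBR t i).2.1⟩
  have step_ge : ∀ t i, pstar i ≤ p (t + 1) i := by
    intro t i
    by_contra hcon
    push_neg at hcon
    have h1 := (key h h0 n Pmax pstar α P0 hh hh0 hn hP hp1 hp2 hα0 hP0 hα hP0c
      (p t) (fun j => (hbox t j).1) i).1 (p (t + 1) i) (hBR t i).1 hcon
    have h2 := (hBR t i).2.2 (pstar i) (hp1 i).le (hp2 i)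
    linarith
  have step_eq : ∀ t, (∀ j, pstar j ≤ p t j) → p (t + 1) = pstar := by
    intro t hge
    funext i
    by_contra hne
    have h1 := (key h h0 n Pmax pstar α P0 hh hh0 hn hP hp1 hp2 hα0 hP0 hα hP0c
      (p t) (fun j => (hbox t j).1) i).2 (fun j => (hbox t j).2) hge
      (p (t + 1) i) (hBR t i).1 (hBR t i).2.1 hne
    have h2 := (hBR t i).2.2 (pstar i) (hp1 i).le (hp2 i)
    linarith
  exact ⟨step_eq 1 (step_ge 0), fun h0le => step_eq 0 h0le⟩
end

section
/- The minimum power budget for a first-order intervention rule based on individual powers to sustain p* ∈ ∏_i (0,P_i] equals PB_1(p*) = max_i (P_i - p_i*)(Σ_{j≠i} h_ij p_j* + n_i)/(p_i* h_{i0}); that is, p* is sustainable by some first-order rule with capability P_0 if and only if P_0 ≥ PB_1(p*). -/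
open Finset

lemma intv_pstar {N : ℕ} (α pstar : Fin N → ℝ) {P0 : ℝ} (hP0 : 0 < P0) :
    intv α pstar P0 pstar = 0 := by
  unfold intv
  have : (∑ i, α i * |pstar i - pstar i|) = 0 := by simp
  rw [this, min_eq_left hP0.le]

lemma intv_update {N : ℕ} (α pstar : Fin N → ℝ) (P0 : ℝ) (i : Fin N) (q : ℝ) :
    intv α pstar P0 (Function.update pstar i q) = min (α i * |q - pstar i|) P0 := by
  unfold intv
  congr 1
  rw [Finset.sum_eq_single i]
  · simp
  · intro j _ hj; simp [Function.update_of_ne hj]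
  · simp

lemma sum_update {N : ℕ} (h : Fin N → Fin N → ℝ) (pstar : Fin N → ℝ) (i : Fin N) (q : ℝ) :
    ∑ j ∈ univ.erase i, h i j * (Function.update pstar i q) j
      = ∑ j ∈ univ.erase i, h i j * pstar j := by
  apply Finset.sum_congr rfl
  intro j hj
  rw [Function.update_of_ne (Finset.ne_of_mem_erase hj)]

/-- Characterization of the minimum power budget `PB₁(p*)`: the target
`p* ∈ ∏_i (0, P_i]` is sustainable by some first-order intervention rule (based
on individual powers) with capability `P₀` iff
`P₀ ≥ (P_i - p_i*)(∑_{j≠i} h_ij p_j* + n_i)/(p_i* h_i0)` for every user `i` with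
`p_i* < P_i`, i.e. iff `P₀ ≥ PB₁(p*)`. -/
theorem stmt9 (N : ℕ) (h : Fin N → Fin N → ℝ) (h0 n Pmax pstar : Fin N → ℝ) (P0 : ℝ)
    (hh : ∀ i j, 0 < h i j) (hh0 : ∀ i, 0 < h0 i) (hn : ∀ i, 0 < n i)
    (hP : ∀ i, 0 < Pmax i) (hp1 : ∀ i, 0 < pstar i) (hp2 : ∀ i, pstar i ≤ Pmax i)
    (hP0 : 0 < P0) :
    (∃ α : Fin N → ℝ, (∀ i, 0 ≤ α i) ∧
        isNE Pmax (sinr h h0 n α pstar P0) pstar) ↔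
    (∀ i, pstar i < Pmax i →
      (Pmax i - pstar i) * (∑ j ∈ univ.erase i, h i j * pstar j + n i) /
        (pstar i * h0 i) ≤ P0) := by
  set D : Fin N → ℝ := fun i => ∑ j ∈ univ.erase i, h i j * pstar j + n i with hDdef
  have hD : ∀ i, 0 < D i := by
    intro i
    have h1 : (0:ℝ) ≤ ∑ j ∈ univ.erase i, h i j * pstar j :=
      Finset.sum_nonneg fun j _ => (mul_pos (hh i j) (hp1 j)).le
    have h2 := hn i
    simp only [hDdef]
    linarith
  have key : ∀ (α : Fin N → ℝ) i q,
      sinr h h0 n α pstar P0 i (Function.update pstar i q)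
        = h i i * q / (h0 i * min (α i * |q - pstar i|) P0 + D i) := by
    intro α i q
    unfold sinr
    rw [intv_update, sum_update, Function.update_self, hDdef]
    ring_nf
  have keyP : ∀ (α : Fin N → ℝ) i,
      sinr h h0 n α pstar P0 i pstar = h i i * pstar i / D i := by
    intro α i
    unfold sinr
    rw [intv_pstar _ _ hP0, hDdef]
    ring_nf
  constructor
  · rintro ⟨α, hα, hNE⟩ i hi
    have hNEi := hNE i (Pmax i) (hP i).le le_rfl
    rw [key, keyP] at hNEi
    set M := min (α i * |Pmax i - pstar i|) P0 with hM
    have hM0 : 0 ≤ M := le_min (mul_nonneg (hα i) (abs_nonneg _)) hP0.le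
    have hMP : M ≤ P0 := min_le_right _ _
    have hden : 0 < h0 i * M + D i := by
      have := mul_nonneg (hh0 i).le hM0
      linarith [hD i]
    rw [div_le_div_iff₀ hden (hD i)] at hNEi
    have hq : (Pmax i - pstar i) * D i ≤ pstar i * h0 i * M := by
      nlinarith [hh i i, hp1 i]
    rw [div_le_iff₀ (mul_pos (hp1 i) (hh0 i))]
    show (Pmax i - pstar i) * D i ≤ P0 * (pstar i * h0 i)
    have hfin : pstar i * h0 i * M ≤ pstar i * h0 i * P0 :=
      mul_le_mul_of_nonneg_left hMP (mul_pos (hp1 i) (hh0 i)).le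
    linarith
  · intro hcond
    refine ⟨fun i => D i / (pstar i * h0 i), fun i => div_nonneg (hD i).le
      (mul_pos (hp1 i) (hh0 i)).le, ?_⟩
    intro i q hq0 hqP
    rw [key, keyP]
    set M := min (D i / (pstar i * h0 i) * |q - pstar i|) P0 with hM
    have hM0 : 0 ≤ M := le_min (mul_nonneg (div_nonneg (hD i).le
      (mul_pos (hp1 i) (hh0 i)).le) (abs_nonneg _)) hP0.le
    have hden : 0 < h0 i * M + D i := by
      have := mul_nonneg (hh0 i).le hM0
      linarith [hD i]
    rw [div_le_div_iff₀ hden (hD i)]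
    have main : q * D i ≤ pstar i * (h0 i * M + D i) := by
      rcases le_or_gt q (pstar i) with hle | hlt
      · have h1 : q * D i ≤ pstar i * D i :=
          mul_le_mul_of_nonneg_right hle (hD i).le
        have h2 : 0 ≤ pstar i * (h0 i * M) :=
          mul_nonneg (hp1 i).le (mul_nonneg (hh0 i).le hM0)
        nlinarith
      · have habs : |q - pstar i| = q - pstar i := abs_of_pos (by linarith)
        have hstar : pstar i < Pmax i := lt_of_lt_of_le hlt hqP
        have hc := hcond i hstar
        rw [div_le_iff₀ (mul_pos (hp1 i) (hh0 i))] at hc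
        have hc' : (Pmax i - pstar i) * D i ≤ P0 * (pstar i * h0 i) := hc
        have hne : pstar i * h0 i ≠ 0 := (mul_pos (hp1 i) (hh0 i)).ne'
        have h1 : (q - pstar i) * D i
            = pstar i * h0 i * (D i / (pstar i * h0 i) * |q - pstar i|) := by
          rw [habs]
          field_simp
          rw [mul_right_comm (pstar i), mul_div_cancel_left₀ _ hne]
        have h2 : (q - pstar i) * D i ≤ pstar i * h0 i * P0 := by
          have h3 : (q - pstar i) * D i ≤ (Pmax i - pstar i) * D i :=
            mul_le_mul_of_nonneg_right (by linarith) (hD i).le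
          nlinarith
        have hminm : (q - pstar i) * D i ≤ pstar i * h0 i * M := by
          rw [hM]
          rcases min_cases (D i / (pstar i * h0 i) * |q - pstar i|) P0 with
            ⟨he, _⟩ | ⟨he, _⟩ <;> rw [he]
          · exact le_of_eq h1
          · exact h2
        nlinarith
    nlinarith [hh i i, hp1 i, hD i, main]
end

section
/- For any target p*, the three power-budget quantities satisfy PB_1(p*) ≤ \overline{PB}_1^s(p*) ≤ \widetilde{PB}_1^s(p*), where PB_1(p*) = max_i (P_i - p_i*)(Σ_{j≠i} h_ij p_j* + n_i)/(p_i* h_{i0}), \overline{PB}_1^s(p*) = Σ_{i=1}^N (∏_{j<i} P_j/p_j*) (P_i - p_i*)(Σ_{j<i} h_ij p_j* + Σ_{j>i} h_ij P_j + n_i)/(p_i* h_{i0}), and \widetilde{PB}_1^s(p*) = [1 - Σ_i (P_i - p_i*)/P_i]^{-1} Σ_i (P_i - p_i*)(Σ_{j≠i} h_ij P_j + n_i)/(P_i h_{i0}); moreover \overline{PB}_1^s(p*) = PB_1(p*) when at most one user has p_i* < P_i, and the last quantity is finite only when Σ_i (P_i - p_i*)/P_i < 1. -/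
open Finset

/-- Weierstrass product inequality. -/
lemma stmt10_weier {ι : Type*} (s : Finset ι) (a : ι → ℝ) (h0 : ∀ i ∈ s, 0 ≤ a i)
    (h1 : ∀ i ∈ s, a i ≤ 1) : 1 - ∑ i ∈ s, a i ≤ ∏ i ∈ s, (1 - a i) := by
  induction s using Finset.cons_induction with
  | empty => simp
  | cons x s hx ih =>
    rw [Finset.sum_cons, Finset.prod_cons]
    have ih' := ih (fun i hi => h0 i (Finset.mem_cons_of_mem hi))
      (fun i hi => h1 i (Finset.mem_cons_of_mem hi))
    have hx0 := h0 x (Finset.mem_cons_self x s)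
    have hx1 := h1 x (Finset.mem_cons_self x s)
    have hsnn : 0 ≤ ∑ i ∈ s, a i :=
      Finset.sum_nonneg (fun i hi => h0 i (Finset.mem_cons_of_mem hi))
    nlinarith

/-- Comparison of the power-budget quantities
`PB₁(p*) ≤ \overline{PB}₁ˢ(p*) ≤ \widetilde{PB}₁ˢ(p*)` (the last under
`∑_i (P_i - p_i*)/P_i < 1`), with equality of the first two when at most one user
has `p_i* < P_i`. Users are ordered so that `p_i* < P_i` iff `i < N'`. -/
theorem stmt10 (N N' : ℕ) (hN : 0 < N) (h : Fin N → Fin N → ℝ)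
    (h0 n Pmax pstar : Fin N → ℝ)
    (hh : ∀ i j, 0 < h i j) (hh0 : ∀ i, 0 < h0 i) (hn : ∀ i, 0 < n i)
    (hP : ∀ i, 0 < Pmax i) (hp1 : ∀ i, 0 < pstar i) (hp2 : ∀ i, pstar i ≤ Pmax i)
    (hord : ∀ i : Fin N, pstar i < Pmax i ↔ (i : ℕ) < N')
    (hsum : ∑ i, (Pmax i - pstar i) / Pmax i < 1)
    (PB1 PBbar PBtilde : ℝ)
    (hPB1 : PB1 = ⨆ i : Fin N,
      (Pmax i - pstar i) * (∑ j ∈ univ.erase i, h i j * pstar j + n i) /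
        (pstar i * h0 i))
    (hPBbar : PBbar = ∑ i,
      (∏ j ∈ univ.filter (fun j => j < i), Pmax j / pstar j) *
        ((Pmax i - pstar i) * (∑ j ∈ univ.filter (fun j => j < i), h i j * pstar j
          + ∑ j ∈ univ.filter (fun j => i < j), h i j * Pmax j + n i) /
          (pstar i * h0 i)))
    (hPBtilde : PBtilde = (1 - ∑ i, (Pmax i - pstar i) / Pmax i)⁻¹ *
      ∑ i, (Pmax i - pstar i) * (∑ j ∈ univ.erase i, h i j * Pmax j + n i) /
        (Pmax i * h0 i)) :
    PB1 ≤ PBbar ∧ PBbar ≤ PBtilde ∧ (N' ≤ 1 → PBbar = PB1) := by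
  haveI : Nonempty (Fin N) := ⟨⟨0, hN⟩⟩
  -- notation
  set T : Fin N → ℝ := fun i =>
    (Pmax i - pstar i) * (∑ j ∈ univ.erase i, h i j * pstar j + n i) /
      (pstar i * h0 i) with hT
  set B : Fin N → ℝ := fun i =>
    (∏ j ∈ univ.filter (fun j => j < i), Pmax j / pstar j) *
      ((Pmax i - pstar i) * (∑ j ∈ univ.filter (fun j => j < i), h i j * pstar j
        + ∑ j ∈ univ.filter (fun j => i < j), h i j * Pmax j + n i) /
        (pstar i * h0 i)) with hB
  -- splitting the erased sum into below/above
  have hsplit : ∀ (i : Fin N) (f : Fin N → ℝ),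
      ∑ j ∈ univ.erase i, f j =
        ∑ j ∈ univ.filter (fun j => j < i), f j +
        ∑ j ∈ univ.filter (fun j => i < j), f j := by
    intro i f
    rw [← Finset.sum_filter_add_sum_filter_not (univ.erase i) (fun j => j < i)]
    congr 1
    · apply Finset.sum_congr _ (fun _ _ => rfl)
      ext j
      simp only [Finset.mem_filter, Finset.mem_erase, Finset.mem_univ, and_true,
        true_and, Fin.lt_def, Fin.ext_iff]
      omega
    · apply Finset.sum_congr _ (fun _ _ => rfl)
      ext j
      simp only [Finset.mem_filter, Finset.mem_erase, Finset.mem_univ, and_true,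
        true_and, Fin.lt_def, Fin.ext_iff]
      omega
  have hQpos : ∀ i : Fin N, (0:ℝ) <
      ∏ j ∈ univ.filter (fun j => j < i), Pmax j / pstar j :=
    fun i => Finset.prod_pos (fun j _ => div_pos (hP j) (hp1 j))
  have hDpos : ∀ i : Fin N, (0:ℝ) <
      ∑ j ∈ univ.filter (fun j => j < i), h i j * pstar j
        + ∑ j ∈ univ.filter (fun j => i < j), h i j * Pmax j + n i := by
    intro i
    have h1 : (0:ℝ) ≤ ∑ j ∈ univ.filter (fun j => j < i), h i j * pstar j :=
      Finset.sum_nonneg (fun j _ => (mul_pos (hh i j) (hp1 j)).le)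
    have h2 : (0:ℝ) ≤ ∑ j ∈ univ.filter (fun j => i < j), h i j * Pmax j :=
      Finset.sum_nonneg (fun j _ => (mul_pos (hh i j) (hP j)).le)
    have := hn i; linarith
  have hBnonneg : ∀ i : Fin N, 0 ≤ B i := by
    intro i
    apply mul_nonneg (hQpos i).le
    apply div_nonneg _ (mul_pos (hp1 i) (hh0 i)).le
    exact mul_nonneg (sub_nonneg.2 (hp2 i)) (hDpos i).le
  have hTnonneg : ∀ i : Fin N, 0 ≤ T i := by
    intro i
    apply div_nonneg _ (mul_pos (hp1 i) (hh0 i)).le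
    apply mul_nonneg (sub_nonneg.2 (hp2 i))
    have : (0:ℝ) ≤ ∑ j ∈ univ.erase i, h i j * pstar j :=
      Finset.sum_nonneg (fun j _ => (mul_pos (hh i j) (hp1 j)).le)
    linarith [hn i]
  have hTleB : ∀ i : Fin N, T i ≤ B i := by
    intro i
    have hQ1 : (1:ℝ) ≤ ∏ j ∈ univ.filter (fun j => j < i), Pmax j / pstar j := by
      calc (1:ℝ) = ∏ _j ∈ univ.filter (fun j => j < i), (1:ℝ) := by simp
        _ ≤ ∏ j ∈ univ.filter (fun j => j < i), Pmax j / pstar j :=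
          Finset.prod_le_prod (fun _ _ => zero_le_one)
            (fun j _ => (one_le_div (hp1 j)).2 (hp2 j))
    have hA : ∑ j ∈ univ.erase i, h i j * pstar j + n i ≤
        ∑ j ∈ univ.filter (fun j => j < i), h i j * pstar j
          + ∑ j ∈ univ.filter (fun j => i < j), h i j * Pmax j + n i := by
      rw [hsplit i (fun j => h i j * pstar j)]
      have : ∑ j ∈ univ.filter (fun j => i < j), h i j * pstar j ≤
          ∑ j ∈ univ.filter (fun j => i < j), h i j * Pmax j :=
        Finset.sum_le_sum (fun j _ =>
          mul_le_mul_of_nonneg_left (hp2 j) (hh i j).le)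
      linarith
    calc T i ≤ (Pmax i - pstar i) *
          (∑ j ∈ univ.filter (fun j => j < i), h i j * pstar j
            + ∑ j ∈ univ.filter (fun j => i < j), h i j * Pmax j + n i) /
          (pstar i * h0 i) := by
          simp only [hT]
          gcongr
          all_goals first
            | exact mul_pos (hp1 i) (hh0 i)
            | exact (mul_pos (hp1 i) (hh0 i)).le
            | exact sub_nonneg.2 (hp2 i)
            | exact hA
      _ ≤ B i := by
          simp only [hB]
          exact le_mul_of_one_le_left
            (div_nonneg (mul_nonneg (sub_nonneg.2 (hp2 i)) (hDpos i).le)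
              (mul_pos (hp1 i) (hh0 i)).le) hQ1
  -- Part 1
  have part1 : PB1 ≤ PBbar := by
    rw [hPB1, hPBbar]
    exact ciSup_le fun i => (hTleB i).trans
      (Finset.single_le_sum (fun j _ => hBnonneg j) (Finset.mem_univ i))
  -- Part 2
  have hS : (0:ℝ) < 1 - ∑ i, (Pmax i - pstar i) / Pmax i := by linarith
  have hprod_sub : ∀ s : Finset (Fin N),
      1 - ∑ i, (Pmax i - pstar i) / Pmax i ≤ ∏ j ∈ s, pstar j / Pmax j := by
    intro s
    have hone_sub : ∀ j : Fin N, 1 - (Pmax j - pstar j) / Pmax j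
        = pstar j / Pmax j := by
      intro j
      have := (hP j).ne'
      field_simp
      ring
    have huniv : 1 - ∑ i, (Pmax i - pstar i) / Pmax i ≤
        ∏ j, pstar j / Pmax j := by
      calc 1 - ∑ i, (Pmax i - pstar i) / Pmax i
          ≤ ∏ j, (1 - (Pmax j - pstar j) / Pmax j) :=
            stmt10_weier univ _
              (fun j _ => div_nonneg (sub_nonneg.2 (hp2 j)) (hP j).le)
              (fun j _ => div_le_one_of_le₀ (by linarith [hp1 j]) (hP j).le)
        _ = ∏ j, pstar j / Pmax j :=
            Finset.prod_congr rfl (fun j _ => hone_sub j)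
    have hcompl : ∏ j ∈ sᶜ, pstar j / Pmax j ≤ 1 :=
      Finset.prod_le_one (fun j _ => (div_pos (hp1 j) (hP j)).le)
        (fun j _ => div_le_one_of_le₀ (hp2 j) (hP j).le)
    have hpos : (0:ℝ) < ∏ j ∈ s, pstar j / Pmax j :=
      Finset.prod_pos (fun j _ => div_pos (hp1 j) (hP j))
    calc 1 - ∑ i, (Pmax i - pstar i) / Pmax i
        ≤ ∏ j, pstar j / Pmax j := huniv
      _ = (∏ j ∈ s, pstar j / Pmax j) * ∏ j ∈ sᶜ, pstar j / Pmax j :=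
          (Finset.prod_mul_prod_compl s _).symm
      _ ≤ ∏ j ∈ s, pstar j / Pmax j :=
          mul_le_of_le_one_right hpos.le hcompl
  have hkey : ∀ i : Fin N,
      (∏ j ∈ univ.filter (fun j => j < i), Pmax j / pstar j) *
        (Pmax i / pstar i) ≤ (1 - ∑ i, (Pmax i - pstar i) / Pmax i)⁻¹ := by
    intro i
    have hins : univ.filter (fun j => j ≤ i) =
        insert i (univ.filter (fun j => j < i)) := by
      ext j
      simp only [Finset.mem_filter, Finset.mem_univ, true_and,
        Finset.mem_insert, Fin.lt_def, Fin.le_def, Fin.ext_iff]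
      omega
    have him : i ∉ univ.filter (fun j => j < i) := by simp
    have h1 : (∏ j ∈ univ.filter (fun j => j < i), Pmax j / pstar j) *
        (Pmax i / pstar i) =
        ∏ j ∈ univ.filter (fun j => j ≤ i), Pmax j / pstar j := by
      rw [hins, Finset.prod_insert him]; ring
    have h2 : ∏ j ∈ univ.filter (fun j => j ≤ i), Pmax j / pstar j =
        (∏ j ∈ univ.filter (fun j => j ≤ i), pstar j / Pmax j)⁻¹ := by
      rw [← Finset.prod_inv_distrib]
      exact Finset.prod_congr rfl (fun j _ => (inv_div _ _).symm)
    rw [h1, h2]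
    exact inv_anti₀ hS (hprod_sub _)
  have part2 : PBbar ≤ PBtilde := by
    rw [hPBbar, hPBtilde, Finset.mul_sum]
    apply Finset.sum_le_sum
    intro i _
    have hC : ∑ j ∈ univ.filter (fun j => j < i), h i j * pstar j
        + ∑ j ∈ univ.filter (fun j => i < j), h i j * Pmax j + n i ≤
        ∑ j ∈ univ.erase i, h i j * Pmax j + n i := by
      rw [hsplit i (fun j => h i j * Pmax j)]
      have : ∑ j ∈ univ.filter (fun j => j < i), h i j * pstar j ≤
          ∑ j ∈ univ.filter (fun j => j < i), h i j * Pmax j :=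
        Finset.sum_le_sum (fun j _ =>
          mul_le_mul_of_nonneg_left (hp2 j) (hh i j).le)
      linarith
    have hrw : (∏ j ∈ univ.filter (fun j => j < i), Pmax j / pstar j) *
        ((Pmax i - pstar i) *
          (∑ j ∈ univ.filter (fun j => j < i), h i j * pstar j
            + ∑ j ∈ univ.filter (fun j => i < j), h i j * Pmax j + n i) /
          (pstar i * h0 i)) =
        ((∏ j ∈ univ.filter (fun j => j < i), Pmax j / pstar j) *
          (Pmax i / pstar i)) *
        ((Pmax i - pstar i) *
          (∑ j ∈ univ.filter (fun j => j < i), h i j * pstar j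
            + ∑ j ∈ univ.filter (fun j => i < j), h i j * Pmax j + n i) /
          (Pmax i * h0 i)) := by
      have key : ∀ X : ℝ, X / (pstar i * h0 i) =
          (Pmax i / pstar i) * (X / (Pmax i * h0 i)) := by
        intro X
        have h1 := (hP i).ne'
        have h2 := (hp1 i).ne'
        have h3 := (hh0 i).ne'
        field_simp
      rw [key]
      ring
    rw [hrw]
    apply mul_le_mul (hkey i)
    · gcongr
      all_goals first
        | exact mul_pos (hP i) (hh0 i)
        | exact (mul_pos (hP i) (hh0 i)).le
        | exact sub_nonneg.2 (hp2 i)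
        | exact hC
    · exact div_nonneg (mul_nonneg (sub_nonneg.2 (hp2 i)) (hDpos i).le)
        (mul_pos (hP i) (hh0 i)).le
    · exact (inv_nonneg).2 hS.le
  -- Part 3
  refine ⟨part1, part2, fun hN1 => ?_⟩
  have hzero : ∀ j : Fin N, (j:ℕ) ≠ 0 → Pmax j - pstar j = 0 := by
    intro j hj
    have h1 : ¬ pstar j < Pmax j := by rw [hord]; omega
    have h2 := hp2 j
    have h3 : pstar j = Pmax j := le_antisymm h2 (not_lt.1 h1)
    linarith
  have hsumB : PBbar = B ⟨0, hN⟩ := by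
    rw [hPBbar]
    apply Finset.sum_eq_single_of_mem _ (Finset.mem_univ _)
    intro j _ hj
    have hj0 : (j:ℕ) ≠ 0 := fun hc => hj (Fin.ext hc)
    simp [hB, hzero j hj0]
  have hemp : univ.filter (fun j => j < (⟨0, hN⟩ : Fin N)) = ∅ := by
    ext j
    simp [Fin.lt_def]
  have hgt : univ.filter (fun j => (⟨0, hN⟩ : Fin N) < j) =
      univ.erase (⟨0, hN⟩ : Fin N) := by
    have h00 : ((⟨0, hN⟩ : Fin N) : ℕ) = 0 := rfl
    ext j
    simp only [Finset.mem_filter, Finset.mem_erase, Finset.mem_univ, and_true,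
      true_and, Fin.lt_def, Fin.ext_iff, h00]
    omega
  have hsum_eq : ∑ j ∈ univ.erase (⟨0, hN⟩ : Fin N), h ⟨0, hN⟩ j * Pmax j =
      ∑ j ∈ univ.erase (⟨0, hN⟩ : Fin N), h ⟨0, hN⟩ j * pstar j := by
    apply Finset.sum_congr rfl
    intro j hj
    have hj0 : (j:ℕ) ≠ 0 := fun hc => (Finset.mem_erase.1 hj).1 (Fin.ext hc)
    have := hzero j hj0
    have hPp : Pmax j = pstar j := by linarith
    rw [hPp]
  have hBi0 : B ⟨0, hN⟩ = T ⟨0, hN⟩ := by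
    simp only [hB, hT, hemp, hgt, Finset.prod_empty, Finset.sum_empty, one_mul,
      zero_add, hsum_eq]
  have hsupT : PB1 = T ⟨0, hN⟩ := by
    rw [hPB1]
    apply le_antisymm
    · apply ciSup_le
      intro j
      by_cases hj : (j:ℕ) = 0
      · have hje : j = ⟨0, hN⟩ := Fin.ext hj
        rw [hje]
      · have hz := hzero j hj
        have hTj : T j = 0 := by simp [hT, hz]
        rw [hTj]
        exact hTnonneg _
    · exact le_ciSup (Set.Finite.bddAbove (Set.finite_range T)) _
  rw [hsumB, hBi0, hsupT]
end

section
/- (Theorem 6, 'if' direction) Consider the aggregate-power intervention rule f(p) = [α_0 |Σ_i h_{0i} p_i − p_A*|]_0^{P_0} with p_A* = Σ_i h_{0i} p_i*. If α_0 ≥ max_{i: p_i*<P_i} (Σ_{j≠i} h_ij p_j* + n_i)/(h_{0i} p_i* h_{i0}) and P_0 ≥ max_{i: p_i*<P_i} (P_i − p_i*)(Σ_{j≠i} h_ij p_j* + n_i)/(p_i* h_{i0}), then p* is a Nash equilibrium of the induced game. -/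
open Finset

/-- First-order intervention rule based on aggregate receive power:
`f(p) = [α₀ |∑ i, g_i p_i − p_A*|]₀^{P₀}` with `p_A* = ∑ i, g_i p_i*`,
where `g i = h_{0i}` is the gain from user `i` to the intervention device's
receiver (the expression inside is nonnegative, so the lower truncation is
inactive). -/
noncomputable def intvA {N : ℕ} (α0 : ℝ) (g pstar : Fin N → ℝ) (P0 : ℝ)
    (p : Fin N → ℝ) : ℝ :=
  min (α0 * |∑ i, g i * p i - ∑ i, g i * pstar i|) P0

/-- SINR of user `i` under the aggregate-power intervention rule. -/
noncomputable def sinrA {N : ℕ} (h : Fin N → Fin N → ℝ) (h0 n g : Fin N → ℝ)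
    (α0 : ℝ) (pstar : Fin N → ℝ) (P0 : ℝ) (i : Fin N) (p : Fin N → ℝ) : ℝ :=
  h i i * p i /
    (h0 i * intvA α0 g pstar P0 p + ∑ j ∈ univ.erase i, h i j * p j + n i)

/-- Theorem 6, 'if' direction: the stated lower bounds on the aggregate
intervention rate `α₀` and the capability `P₀` imply that the target `p*` is a
Nash equilibrium under the aggregate-power intervention rule. -/
theorem stmt14 (N : ℕ) (h : Fin N → Fin N → ℝ) (h0 n g Pmax pstar : Fin N → ℝ)
    (α0 P0 : ℝ)
    (hh : ∀ i j, 0 < h i j) (hh0 : ∀ i, 0 < h0 i) (hg : ∀ i, 0 < g i)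
    (hn : ∀ i, 0 < n i)
    (hP : ∀ i, 0 < Pmax i) (hp1 : ∀ i, 0 < pstar i) (hp2 : ∀ i, pstar i ≤ Pmax i)
    (hα0 : 0 ≤ α0) (hP0 : 0 < P0)
    (hα : ∀ i, pstar i < Pmax i →
      (∑ j ∈ univ.erase i, h i j * pstar j + n i) / (g i * pstar i * h0 i) ≤ α0)
    (hP0c : ∀ i, pstar i < Pmax i →
      (Pmax i - pstar i) * (∑ j ∈ univ.erase i, h i j * pstar j + n i) /
        (pstar i * h0 i) ≤ P0) :
    isNE Pmax (sinrA h h0 n g α0 pstar P0) pstar := by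
  intro i q hq0 hqP
  have hS : 0 < ∑ j ∈ univ.erase i, h i j * pstar j + n i := by
    have : (0:ℝ) ≤ ∑ j ∈ univ.erase i, h i j * pstar j :=
      Finset.sum_nonneg fun j _ => mul_nonneg (hh i j).le (hp1 j).le
    linarith [hn i]
  set S := ∑ j ∈ univ.erase i, h i j * pstar j + n i with hSdef
  -- sums under update
  have hsum1 : ∑ j ∈ univ.erase i, h i j * (Function.update pstar i q j)
      = ∑ j ∈ univ.erase i, h i j * pstar j := by
    refine Finset.sum_congr rfl fun j hj => ?_
    rw [Function.update_of_ne (Finset.ne_of_mem_erase hj)]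
  have hsum2 : ∑ j, g j * (Function.update pstar i q j) - ∑ j, g j * pstar j
      = g i * (q - pstar i) := by
    rw [← Finset.add_sum_erase univ (fun j => g j * (Function.update pstar i q j))
        (Finset.mem_univ i),
        ← Finset.add_sum_erase univ (fun j => g j * pstar j) (Finset.mem_univ i)]
    have : ∑ j ∈ univ.erase i, g j * (Function.update pstar i q j)
        = ∑ j ∈ univ.erase i, g j * pstar j := by
      refine Finset.sum_congr rfl fun j hj => ?_
      rw [Function.update_of_ne (Finset.ne_of_mem_erase hj)]
    rw [this, Function.update_self]
    ring
  have hFstar : intvA α0 g pstar P0 pstar = 0 := by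
    simp [intvA, min_eq_left, hα0, hP0.le]
  set F := intvA α0 g pstar P0 (Function.update pstar i q) with hFdef
  have hF0 : 0 ≤ F := le_min (mul_nonneg hα0 (abs_nonneg _)) hP0.le
  have hFval : F = min (α0 * (g i * |q - pstar i|)) P0 := by
    rw [hFdef, intvA, hsum2, abs_mul, abs_of_pos (hg i)]
  have key : q * S ≤ pstar i * (h0 i * F + S) := by
    rcases le_or_gt q (pstar i) with hle | hlt
    · nlinarith [mul_nonneg (mul_nonneg (hp1 i).le (hh0 i).le) hF0]
    · have hiP : pstar i < Pmax i := lt_of_lt_of_le hlt hqP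
      have h1 := hα i hiP
      have h2 := hP0c i hiP
      have hgp : 0 < g i * pstar i * h0 i := mul_pos (mul_pos (hg i) (hp1 i)) (hh0 i)
      have hph : 0 < pstar i * h0 i := mul_pos (hp1 i) (hh0 i)
      rw [div_le_iff₀ hgp] at h1
      rw [div_le_iff₀ hph] at h2
      have habs : |q - pstar i| = q - pstar i := abs_of_pos (by linarith)
      rw [hFval, habs] at *
      rcases min_le_iff.mp (le_refl (min (α0 * (g i * (q - pstar i))) P0)) with _ | _
      all_goals {
        rcases le_total (α0 * (g i * (q - pstar i))) P0 with hm | hm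
        · rw [min_eq_left hm]
          nlinarith [sub_nonneg.mpr hlt.le]
        · rw [min_eq_right hm]
          nlinarith [sub_nonneg.mpr hlt.le, sub_nonneg.mpr hqP] }
  have hD1 : 0 < h0 i * F + S := by nlinarith [mul_nonneg (hh0 i).le hF0]
  show sinrA h h0 n g α0 pstar P0 i (Function.update pstar i q)
      ≤ sinrA h h0 n g α0 pstar P0 i pstar
  rw [sinrA, sinrA, hFstar, hsum1, Function.update_self, ← hFdef]
  rw [mul_zero, zero_add]
  have hassoc : h0 i * F + ∑ j ∈ univ.erase i, h i j * pstar j + n i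
      = h0 i * F + S := by rw [hSdef]; ring
  rw [hassoc, div_le_div_iff₀ (by linarith) hS]
  nlinarith [hh i i]
end

section
/- Under a first-order intervention rule based on individual powers with sufficiently large intervention rates (α_i strictly exceeding the threshold (Σ_{j≠i} h_ij p_j,{-i} + n_i)/(p_i* h_{i0}) computed at the opponents' profile), the best response of user i to any fixed opponent profile p_{-i} is attained either at p_i = p_i* or at p_i = P_i, because user i's SINR as a function of its own power p_i is piecewise monotone: increasing on [0, p_i*], and on [p_i*, P_i] it is the ratio of a linear function to a piecewise-linear function whose maximum over the interval is attained at an endpoint. -/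
/-- Best responses under a first-order intervention rule lie in `{p*, P₁}`:
fixing the opponents' profile (`I` is the interference `∑_{j≠i} h_ij p_j` and
`c = ∑_{j≠i} α_j |p_j − p_j*| ≥ 0`), if the intervention rate strictly exceeds
`(I + n)/(p* h_i0)`, then user `i`'s payoff at any `q ∈ [0, P₁]` is at most the
larger of its payoffs at `p*` and at `P₁`. -/
theorem stmt18 (hii hi0 pstar P1 P0 α c I n : ℝ)
    (hhii : 0 < hii) (hhi0 : 0 < hi0) (hn : 0 < n) (hI : 0 ≤ I) (hc : 0 ≤ c)
    (hp1 : 0 < pstar) (hp2 : pstar ≤ P1) (hP0 : 0 < P0) (hα0 : 0 ≤ α)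
    (hα : (I + n) / (pstar * hi0) < α) :
    ∀ q, 0 ≤ q → q ≤ P1 →
      hii * q / (hi0 * min (α * |q - pstar| + c) P0 + I + n) ≤
      max (hii * pstar / (hi0 * min (α * |pstar - pstar| + c) P0 + I + n))
          (hii * P1 / (hi0 * min (α * |P1 - pstar| + c) P0 + I + n)) := by
  intro q hq0 hq1
  have hpn : 0 < pstar * hi0 := by positivity
  have hα' : I + n < α * (pstar * hi0) := (div_lt_iff₀ hpn).mp hα
  have hαpos : 0 < α := by nlinarith
  have habs_p : |pstar - pstar| = (0:ℝ) := by simp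
  rw [habs_p, mul_zero, zero_add]
  rcases le_or_gt q pstar with hle | hgt
  · -- increasing part: compare with pstar
    refine le_trans ?_ (le_max_left _ _)
    have h1 : |q - pstar| = pstar - q := by
      rw [abs_sub_comm]; exact abs_of_nonneg (by linarith)
    rw [h1]
    have hmono : min c P0 ≤ min (α * (pstar - q) + c) P0 :=
      min_le_min (by nlinarith [mul_nonneg hα0 (by linarith : (0:ℝ) ≤ pstar - q)]) le_rfl
    have hdp : 0 < hi0 * min c P0 + I + n := by
      have h0 : 0 ≤ min c P0 := le_min hc hP0.le
      nlinarith [mul_nonneg hhi0.le h0]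
    exact div_le_div₀ (by positivity) (by nlinarith) hdp
      (by nlinarith [mul_le_mul_of_nonneg_left hmono hhi0.le])
  · have h2 : |q - pstar| = q - pstar := abs_of_nonneg (by linarith)
    have h3 : |P1 - pstar| = P1 - pstar := abs_of_nonneg (by linarith)
    rw [h2, h3]
    have hDq : 0 < hi0 * (α * (q - pstar) + c) + I + n := by
      have h0 : 0 ≤ α * (q - pstar) := mul_nonneg hα0 (by linarith)
      nlinarith [mul_nonneg hhi0.le (by linarith : (0:ℝ) ≤ α * (q - pstar) + c)]
    rcases le_or_gt P0 (α * (q - pstar) + c) with hbig | hsmall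
    · -- min is P0 at q and at P1
      refine le_trans ?_ (le_max_right _ _)
      have hbig1 : P0 ≤ α * (P1 - pstar) + c := by
        nlinarith [mul_le_mul_of_nonneg_left (by linarith : q - pstar ≤ P1 - pstar) hα0]
      rw [min_eq_right hbig, min_eq_right hbig1]
      have hdP : 0 < hi0 * P0 + I + n := by nlinarith
      exact div_le_div₀ (mul_nonneg hhii.le (by linarith)) (by nlinarith) hdP le_rfl
    · rw [min_eq_left hsmall.le]
      rcases le_or_gt (hi0 * c + I + n) (hi0 * α * pstar) with hB | hB
      · -- "B ≤ 0": decreasing, compare with pstar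
        refine le_trans ?_ (le_max_left _ _)
        have hcP0 : c ≤ P0 := by
          nlinarith [mul_nonneg hα0 (by linarith : (0:ℝ) ≤ q - pstar)]
        rw [min_eq_left hcP0]
        rw [div_le_div_iff₀ hDq (by nlinarith)]
        have key : hii * pstar * (hi0 * (α * (q - pstar) + c) + I + n)
            - hii * q * (hi0 * c + I + n)
            = hii * ((hi0 * α * pstar - (hi0 * c + I + n)) * (q - pstar)) := by ring
        have h6 : 0 ≤ hii * ((hi0 * α * pstar - (hi0 * c + I + n)) * (q - pstar)) :=
          mul_nonneg hhii.le (mul_nonneg (by linarith) (by linarith))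
        linarith [key, h6]
      · -- "B > 0": increasing, compare with P1
        refine le_trans ?_ (le_max_right _ _)
        have hDP1 : 0 < hi0 * (α * (P1 - pstar) + c) + I + n := by
          have h8 : 0 ≤ α * (P1 - pstar) := mul_nonneg hα0 (by linarith)
          have h9 : 0 ≤ hi0 * (α * (P1 - pstar) + c) := mul_nonneg hhi0.le (by linarith)
          linarith
        rcases le_or_gt (α * (P1 - pstar) + c) P0 with hP1s | hP1b
        · rw [min_eq_left hP1s]
          rw [div_le_div_iff₀ hDq hDP1]
          have key : hii * P1 * (hi0 * (α * (q - pstar) + c) + I + n)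
              - hii * q * (hi0 * (α * (P1 - pstar) + c) + I + n)
              = hii * ((hi0 * c + I + n - hi0 * α * pstar) * (P1 - q)) := by ring
          have h6 : 0 ≤ hii * ((hi0 * c + I + n - hi0 * α * pstar) * (P1 - q)) :=
            mul_nonneg hhii.le (mul_nonneg (by linarith) (by linarith))
          linarith [key, h6]
        · rw [min_eq_right hP1b.le]
          obtain ⟨t, ht⟩ : ∃ t : ℝ, t = pstar + (P0 - c) / α := ⟨_, rfl⟩
          have hαne : α ≠ 0 := ne_of_gt hαpos
          have hAt : α * (t - pstar) = P0 - c := by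
            rw [ht]; field_simp; ring
          have hqt : q ≤ t := by
            have hcm : (q - pstar) * α = α * (q - pstar) := mul_comm _ _
            have h4 : q - pstar ≤ (P0 - c) / α :=
              (le_div_iff₀ hαpos).mpr (by linarith)
            linarith [h4]
          have htP1 : t ≤ P1 := by
            have hcm : (P1 - pstar) * α = α * (P1 - pstar) := mul_comm _ _
            have h5 : (P0 - c) / α ≤ P1 - pstar :=
              (div_le_iff₀ hαpos).mpr (by linarith)
            linarith [h5]
          have hEq : hi0 * P0 + I + n = hi0 * α * t + (hi0 * c + I + n - hi0 * α * pstar) := by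
            linear_combination (-hi0) * hAt
          have hdP : 0 < hi0 * P0 + I + n := by
            have := mul_pos hhi0 hP0; linarith
          rw [div_le_div_iff₀ hDq hdP]
          rw [hEq]
          have key : hii * P1 * (hi0 * (α * (q - pstar) + c) + I + n)
              - hii * q * (hi0 * α * t + (hi0 * c + I + n - hi0 * α * pstar))
              = hii * ((P1 - t) * (hi0 * (α * (q - pstar) + c) + I + n))
                + hii * ((hi0 * c + I + n - hi0 * α * pstar) * (t - q)) := by ring
          have h6 : 0 ≤ hii * ((P1 - t) * (hi0 * (α * (q - pstar) + c) + I + n)) :=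
            mul_nonneg hhii.le (mul_nonneg (by linarith) hDq.le)
          have h7 : 0 ≤ hii * ((hi0 * c + I + n - hi0 * α * pstar) * (t - q)) :=
            mul_nonneg hhii.le (mul_nonneg (by linarith) (by linarith))
          linarith only [key, h6, h7]
end
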